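/- arXiv:2003.13338 — 3 statements merged into one kernel-verified Lean document; each statement's English description precedes it below -/
import Mathlib

section
/- Let N = (V, A, c) be a network and x, y, z ∈ V with y ≠ z. Then λ^N_{yz}(x) = φ^N_{yz}(x) = δ^N_{yz}(x), i.e. the three quantities — the minimum number of paths through x in a maximum sequence of arc-disjoint paths from y to z, the drop φ^N_{yz} − φ^{N_x}_{yz} in maximum flow value when the capacities of arcs incident to x are set to zero, and the minimum flow through x over all maximum flows from y to z — all coincide. -/
/-!
Networks on the complete digraph: capacities `c : V → V → ℕ` with no loops
(arcs are ordered pairs of distinct vertices; loops are given capacity 0).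
-/

structure Network (V : Type*) where
  c : V → V → ℕ
  no_loop : ∀ v, c v v = 0

namespace NetFlow

variable {V : Type*} [Fintype V] [DecidableEq V]

/-- `f` is a flow from `y` to `z` in `N`. -/
def IsFlow (N : Network V) (y z : V) (f : V → V → ℕ) : Prop :=
  (∀ u v, f u v ≤ N.c u v) ∧
  (∀ x, x ≠ y → x ≠ z → ∑ u, f u x = ∑ u, f x u)

/-- The value of a flow from `y`. -/
def flowValue (f : V → V → ℕ) (y : V) : ℤ :=
  (∑ u, (f y u : ℤ)) - ∑ u, (f u y : ℤ)

/-- The maximum flow value `φ^N_{yz}`. -/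
noncomputable def maxFlowValue (N : Network V) (y z : V) : ℕ :=
  sSup {m : ℕ | ∃ f, IsFlow N y z f ∧ flowValue f y = (m : ℤ)}

/-- `f` is a maximum flow from `y` to `z` in `N`. -/
def IsMaxFlow (N : Network V) (y z : V) (f : V → V → ℕ) : Prop :=
  IsFlow N y z f ∧ flowValue f y = (maxFlowValue N y z : ℤ)

/-- The network `N_X`: capacities of arcs incident to `X` are set to zero. -/
def removeVerts (N : Network V) (X : Finset V) : Network V where
  c u v := if u ∈ X ∨ v ∈ X then 0 else N.c u v
  no_loop v := by simp [N.no_loop v]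

/-- `φ^N_{yz}(X) = φ^N_{yz} - φ^{N_X}_{yz}`. -/
noncomputable def phiDrop (N : Network V) (y z : V) (X : Finset V) : ℤ :=
  (maxFlowValue N y z : ℤ) - (maxFlowValue (removeVerts N X) y z : ℤ)

/-- The (consecutive) arcs of a list of vertices. -/
def pathArcs (p : List V) : List (V × V) := p.zip p.tail

/-- `p` is a path from `y` to `z` in `N`: at least two distinct vertices, starting at `y`,
ending at `z`, with all consecutive arcs of positive capacity. -/
def IsPath (N : Network V) (y z : V) (p : List V) : Prop :=
  2 ≤ p.length ∧ p.Nodup ∧ p.head? = some y ∧ p.getLast? = some z ∧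
    p.Chain' fun u v => 1 ≤ N.c u v

/-- `p` is a cycle in `N`. -/
def IsCycle (N : Network V) (p : List V) : Prop :=
  3 ≤ p.length ∧ p.dropLast.Nodup ∧ p.head? = p.getLast? ∧
    p.Chain' fun u v => 1 ≤ N.c u v

/-- A sequence of arc-disjoint paths from `y` to `z` in `N`: each component is a path, and
each arc `a` is used by at most `c a` components. -/
def IsPathSeq (N : Network V) (y z : V) (γ : List (List V)) : Prop :=
  (∀ p ∈ γ, IsPath N y z p) ∧
  ∀ u v : V, γ.countP (fun p => decide ((u, v) ∈ pathArcs p)) ≤ N.c u v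

/-- `λ^N_{yz}`: the maximum length of a sequence of arc-disjoint paths from `y` to `z`. -/
noncomputable def maxSeqLen (N : Network V) (y z : V) : ℕ :=
  sSup {m : ℕ | ∃ γ : List (List V), IsPathSeq N y z γ ∧ γ.length = m}

/-- `M^N_{yz}`: the sequences of arc-disjoint paths from `y` to `z` of maximum length. -/
def MaxSeqs (N : Network V) (y z : V) : Set (List (List V)) :=
  {γ | IsPathSeq N y z γ ∧ γ.length = maxSeqLen N y z}

/-- `l_X(γ)`: the number of components of `γ` having a vertex in `X`. -/
def lX (X : Finset V) (γ : List (List V)) : ℕ :=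
  γ.countP fun p => p.any fun x => decide (x ∈ X)

/-- `λ^N_{yz}(X)`: the minimum of `l_X` over maximum-length sequences of arc-disjoint paths. -/
noncomputable def lambdaX (N : Network V) (y z : V) (X : Finset V) : ℕ :=
  sInf {n : ℕ | ∃ γ ∈ MaxSeqs N y z, lX X γ = n}

/-- The flow through a vertex: `f(x) = Σ_{a exiting x} f(a)` if `x ∉ {y,z}`, `v(f)` otherwise. -/
def vertexFlow (f : V → V → ℕ) (y z x : V) : ℤ :=
  if x = y ∨ x = z then flowValue f y else ∑ u, (f x u : ℤ)

/-- `δ^N_{yz}(X)`: the minimum of `f(X) = Σ_{x∈X} f(x)` over maximum flows `f`. -/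
noncomputable def deltaX (N : Network V) (y z : V) (X : Finset V) : ℕ :=
  sInf {n : ℕ | ∃ f, IsMaxFlow N y z f ∧ (∑ x ∈ X, vertexFlow f y z x) = (n : ℤ)}

/-- The flow `f_γ` associated with a sequence of arc-disjoint paths. -/
def seqFlow (γ : List (List V)) (u v : V) : ℕ :=
  γ.countP fun p => decide ((u, v) ∈ pathArcs p)

/-- The path (or cycle) function `χ_p` of a path or cycle `p`. -/
def chi (p : List V) (u v : V) : ℕ := (pathArcs p).count (u, v)

/-- `(γ, w)` is a decomposition of the flow `f`: `γ` is a sequence of `v(f)` paths from `y`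
to `z`, `w` a sequence of cycles, and `f = Σ_j χ_{γ_j} + Σ_j χ_{w_j}`. -/
def IsDecomposition (N : Network V) (y z : V) (f : V → V → ℕ)
    (γ w : List (List V)) : Prop :=
  (∀ p ∈ γ, IsPath N y z p) ∧ (∀ q ∈ w, IsCycle N q) ∧
  (γ.length : ℤ) = flowValue f y ∧
  ∀ u v : V, f u v = (γ.map fun p => chi p u v).sum + (w.map fun q => chi q u v).sum

/-- The forward arcs of a generalized path given by vertices `p` and directions `d`. -/
def forwardArcs (p : List V) (d : List Bool) : List (V × V) :=
  ((p.zip p.tail).zip d).filterMap fun e => if e.2 then some e.1 else none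

/-- The backward arcs of a generalized path given by vertices `p` and directions `d`. -/
def backwardArcs (p : List V) (d : List Bool) : List (V × V) :=
  ((p.zip p.tail).zip d).filterMap fun e => if e.2 then none else some (e.1.2, e.1.1)

/-- `(p, d)` is a generalized path from `y` to `z`: distinct vertices `x_1 = y, …, x_m = z`
(`m ≥ 2`), the `i`-th arc being `(x_i, x_{i+1})` (forward, `d_i = true`) or `(x_{i+1}, x_i)`
(backward, `d_i = false`). -/
def IsGenPath (y z : V) (p : List V) (d : List Bool) : Prop :=
  2 ≤ p.length ∧ p.Nodup ∧ p.head? = some y ∧ p.getLast? = some z ∧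
    d.length + 1 = p.length

/-- `(p, d)` is an augmenting path for `f` from `y` to `z` in `N`. -/
def IsAugPath (N : Network V) (y z : V) (f : V → V → ℕ)
    (p : List V) (d : List Bool) : Prop :=
  IsGenPath y z p d ∧
  (∀ a ∈ forwardArcs p d, f a.1 a.2 < N.c a.1 a.2) ∧
  (∀ a ∈ backwardArcs p d, 1 ≤ f a.1 a.2)

/-- `χ_σ` for a generalized path `σ = (p, d)`: `+1` on forward arcs, `-1` on backward arcs. -/
def chiGen (p : List V) (d : List Bool) (u v : V) : ℤ :=
  ((forwardArcs p d).count (u, v) : ℤ) - ((backwardArcs p d).count (u, v) : ℤ)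

/-- The full flow vitality group centrality measure `φ^N(X)`. -/
noncomputable def phiGC (N : Network V) (X : Finset V) : ℝ :=
  ∑ a ∈ Finset.univ.filter (fun a : V × V => a.1 ≠ a.2 ∧ 0 < maxFlowValue N a.1 a.2),
    (phiDrop N a.1 a.2 X : ℝ) / (maxFlowValue N a.1 a.2 : ℝ)

/-- The full flow betweenness group centrality measure `λ^N(X)`. -/
noncomputable def lambdaGC (N : Network V) (X : Finset V) : ℝ :=
  ∑ a ∈ Finset.univ.filter (fun a : V × V => a.1 ≠ a.2 ∧ 0 < maxFlowValue N a.1 a.2),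
    (lambdaX N a.1 a.2 X : ℝ) / (maxFlowValue N a.1 a.2 : ℝ)

end NetFlow

namespace NetFlowAux
set_option linter.unusedSectionVars false

open NetFlow

variable {V : Type*} [Fintype V] [DecidableEq V]

/-! ### Basic excess machinery -/

def outZ (f : V → V → ℕ) (v : V) : ℤ := ∑ u, (f v u : ℤ)
def inZ (f : V → V → ℕ) (v : V) : ℤ := ∑ u, (f u v : ℤ)
def exz (f : V → V → ℕ) (v : V) : ℤ := outZ f v - inZ f v

lemma flowValue_eq_exz (f : V → V → ℕ) (y : V) : flowValue f y = exz f y := rfl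

lemma sum_exz_zero (f : V → V → ℕ) : ∑ v, exz f v = 0 := by
  simp only [exz, outZ, inZ, Finset.sum_sub_distrib]
  rw [Finset.sum_comm]
  ring

lemma exz_eq_zero_of_flow {N : Network V} {y z : V} {f : V → V → ℕ}
    (hf : IsFlow N y z f) {v : V} (hv : v ≠ y) (hv' : v ≠ z) : exz f v = 0 := by
  have := hf.2 v hv hv'
  simp only [exz, outZ, inZ]
  have h1 : (∑ u, (f u v : ℤ)) = ∑ u, (f v u : ℤ) := by exact_mod_cast congrArg (Nat.cast : ℕ → ℤ) this
  omega

lemma exz_z_eq {N : Network V} {y z : V} {f : V → V → ℕ}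
    (hf : IsFlow N y z f) (hyz : y ≠ z) : exz f z = - flowValue f y := by
  have h0 := sum_exz_zero f
  have h1 : ∑ v, exz f v = exz f y + exz f z := by
    rw [← Finset.sum_subset (Finset.subset_univ ({y, z} : Finset V))]
    · rw [Finset.sum_pair hyz]
    · intro v _ hv
      simp only [Finset.mem_insert, Finset.mem_singleton, not_or] at hv
      exact exz_eq_zero_of_flow hf hv.1 hv.2
  rw [flowValue_eq_exz]
  omega

/-! ### Existence of maximum flows -/

lemma isFlow_zero (N : Network V) (y z : V) : IsFlow N y z (fun _ _ => 0) :=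
  ⟨fun _ _ => Nat.zero_le _, fun _ _ _ => rfl⟩

lemma flowValue_zero (y : V) : flowValue (fun _ _ => (0:ℕ)) y = 0 := by
  simp [flowValue]

lemma flowValue_le_capSum {N : Network V} {y z : V} {f : V → V → ℕ}
    (hf : IsFlow N y z f) : flowValue f y ≤ ∑ u, (N.c y u : ℤ) := by
  have h1 : (∑ u, (f y u : ℤ)) ≤ ∑ u, (N.c y u : ℤ) :=
    Finset.sum_le_sum fun u _ => by exact_mod_cast hf.1 y u
  have h2 : (0:ℤ) ≤ ∑ u, (f u y : ℤ) :=
    Finset.sum_nonneg fun u _ => by positivity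
  simp only [flowValue]
  omega

lemma flowSet_nonempty (N : Network V) (y z : V) :
    {m : ℕ | ∃ f, IsFlow N y z f ∧ flowValue f y = (m : ℤ)}.Nonempty :=
  ⟨0, fun _ _ => 0, isFlow_zero N y z, by simp [flowValue]⟩

lemma flowSet_bddAbove (N : Network V) (y z : V) :
    BddAbove {m : ℕ | ∃ f, IsFlow N y z f ∧ flowValue f y = (m : ℤ)} := by
  refine ⟨(∑ u, N.c y u), fun m hm => ?_⟩
  obtain ⟨f, hf, hv⟩ := hm
  have h := flowValue_le_capSum hf
  rw [hv] at h
  exact_mod_cast h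

lemma exists_isMaxFlow (N : Network V) (y z : V) : ∃ f, IsMaxFlow N y z f := by
  have := Nat.sSup_mem (flowSet_nonempty N y z) (flowSet_bddAbove N y z)
  obtain ⟨f, hf, hv⟩ := this
  exact ⟨f, hf, hv⟩

lemma le_maxFlowValue {N : Network V} {y z : V} {f : V → V → ℕ} {m : ℕ}
    (hf : IsFlow N y z f) (hm : flowValue f y = (m : ℤ)) : m ≤ maxFlowValue N y z :=
  le_csSup (flowSet_bddAbove N y z) ⟨f, hf, hm⟩

lemma flowValue_le_maxFlowValue {N : Network V} {y z : V} {f : V → V → ℕ}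
    (hf : IsFlow N y z f) : flowValue f y ≤ (maxFlowValue N y z : ℤ) := by
  rcases le_or_gt (flowValue f y) 0 with h | h
  · exact h.trans (by positivity)
  · obtain ⟨m, hm⟩ := Int.eq_ofNat_of_zero_le h.le
    rw [hm]
    exact_mod_cast le_maxFlowValue hf hm

end NetFlowAux

namespace NetFlowAux
set_option linter.unusedSectionVars false
open NetFlow

variable {V : Type*} [Fintype V] [DecidableEq V]

/-! ### pathArcs and chi -/

lemma pathArcs_cons₂ (a b : V) (l : List V) :
    pathArcs (a :: b :: l) = (a, b) :: pathArcs (b :: l) := rfl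

lemma map_fst_pathArcs : ∀ p : List V, (pathArcs p).map Prod.fst = p.dropLast
  | [] => rfl
  | [_] => rfl
  | a :: b :: l => by
      rw [pathArcs_cons₂, List.map_cons, map_fst_pathArcs (b :: l)]
      rfl

lemma map_snd_pathArcs : ∀ p : List V, (pathArcs p).map Prod.snd = p.tail
  | [] => rfl
  | [_] => rfl
  | a :: b :: l => by
      rw [pathArcs_cons₂, List.map_cons, map_snd_pathArcs (b :: l)]
      rfl

lemma chain'_of_pathArcs {R : V → V → Prop} :
    ∀ {p : List V}, p.Chain' R → ∀ {u v : V}, (u, v) ∈ pathArcs p → R u v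
  | [], _, _, _, h => by simp [pathArcs] at h
  | [_], _, _, _, h => by simp [pathArcs] at h
  | a :: b :: l, hc, u, v, h => by
      simp only [List.Chain'] at hc; rw [List.isChain_cons_cons] at hc
      rw [pathArcs_cons₂, List.mem_cons] at h
      rcases h with h | h
      · simp only [Prod.mk.injEq] at h
        obtain ⟨rfl, rfl⟩ := h
        exact hc.1
      · exact chain'_of_pathArcs hc.2 h

lemma sum_count_fst (L : List (V × V)) (x : V) :
    ∑ u, L.count (x, u) = (L.map Prod.fst).count x := by
  induction L with
  | nil => simp
  | cons a L ih =>
      obtain ⟨a1, a2⟩ := a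
      simp only [List.count_cons, List.map_cons, Finset.sum_add_distrib, ih, beq_iff_eq,
        Prod.mk.injEq]
      congr 1
      rcases eq_or_ne a1 x with rfl | h
      · simp
      · simp [fun u => show ¬(a1 = x ∧ a2 = u) from fun hh => h hh.1, h]

lemma sum_count_snd (L : List (V × V)) (x : V) :
    ∑ u, L.count (u, x) = (L.map Prod.snd).count x := by
  induction L with
  | nil => simp
  | cons a L ih =>
      obtain ⟨a1, a2⟩ := a
      simp only [List.count_cons, List.map_cons, Finset.sum_add_distrib, ih, beq_iff_eq,
        Prod.mk.injEq]
      congr 1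
      rcases eq_or_ne a2 x with rfl | h
      · simp
      · simp [fun u => show ¬(a1 = u ∧ a2 = x) from fun hh => h hh.2, h]

lemma chi_out_sum (p : List V) (x : V) : ∑ u, chi p x u = p.dropLast.count x := by
  rw [← map_fst_pathArcs]
  exact sum_count_fst _ _

lemma chi_in_sum (p : List V) (x : V) : ∑ u, chi p u x = p.tail.count x := by
  rw [← map_snd_pathArcs]
  exact sum_count_snd _ _

lemma count_head_tail {p : List V} {y : V} (h : p.head? = some y) (v : V) :
    p.count v = (if v = y then 1 else 0) + p.tail.count v := by
  cases p with
  | nil => simp at h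
  | cons a t =>
      simp only [List.head?_cons, Option.some.injEq] at h
      subst h
      simp only [List.count_cons, List.tail_cons, beq_iff_eq]
      rcases eq_or_ne v a with rfl | h
      · simp [Nat.add_comm]
      · simp [h, Ne.symm h]

lemma count_dropLast_last {p : List V} {z : V} (h : p.getLast? = some z) (v : V) :
    p.count v = p.dropLast.count v + (if v = z then 1 else 0) := by
  have hne : p ≠ [] := by rintro rfl; simp at h
  have hz : p.getLast hne = z := (List.getLast?_eq_getLast hne ▸ h : _) |> Option.some.inj
  conv_lhs => rw [← List.dropLast_concat_getLast hne]
  rw [List.count_append, hz, List.count_singleton]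
  simp only [beq_iff_eq]
  rcases eq_or_ne v z with rfl | h
  · simp
  · simp [h, Ne.symm h]

/-- For a path, out-count minus in-count at each vertex. -/
lemma count_dropLast_sub_tail {p : List V} {y z : V}
    (hh : p.head? = some y) (hl : p.getLast? = some z) (v : V) :
    (p.dropLast.count v : ℤ) - p.tail.count v
      = (if v = y then 1 else 0) - (if v = z then 1 else 0) := by
  have h1 := count_head_tail hh v
  have h2 := count_dropLast_last hl v
  have := h1.symm.trans h2
  rcases eq_or_ne v y with rfl | hvy <;> rcases eq_or_ne v z with rfl | hvz <;>
    simp_all <;> omega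

lemma exz_chi_path {N : Network V} {y z : V} {p : List V} (hp : IsPath N y z p) (v : V) :
    exz (chi p) v = (if v = y then 1 else 0) - (if v = z then 1 else 0) := by
  obtain ⟨-, -, hh, hl, -⟩ := hp
  simp only [exz, outZ, inZ]
  rw [← Nat.cast_sum, ← Nat.cast_sum, chi_out_sum, chi_in_sum]
  exact count_dropLast_sub_tail hh hl v

lemma exz_chi_cycle {N : Network V} {p : List V} (hp : IsCycle N p) (v : V) :
    exz (chi p) v = 0 := by
  obtain ⟨hlen, -, hh, -⟩ := hp
  have hne : p ≠ [] := by rintro rfl; simp at hlen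
  obtain ⟨a, ha⟩ : ∃ a, p.head? = some a := ⟨p.head hne, List.head?_eq_head hne⟩
  simp only [exz, outZ, inZ]
  rw [← Nat.cast_sum, ← Nat.cast_sum, chi_out_sum, chi_in_sum]
  rw [count_dropLast_sub_tail ha (hh ▸ ha)]
  ring

lemma count_le_one_of_nodup {α : Type*} [BEq α] [LawfulBEq α] {l : List α}
    (h : l.Nodup) (a : α) : l.count a ≤ 1 := by
  induction l with
  | nil => simp
  | cons b l ih =>
      rcases List.nodup_cons.1 h with ⟨hb, hl⟩
      rw [List.count_cons]
      rcases eq_or_ne b a with rfl | hba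
      · have : l.count b = 0 := List.count_eq_zero.2 hb
        simp [this]
      · simp [hba, ih hl]

lemma pathArcs_nodup {p : List V} (h : p.dropLast.Nodup) : (pathArcs p).Nodup :=
  List.Nodup.of_map Prod.fst (map_fst_pathArcs p ▸ h)

lemma chi_eq_ite {p : List V} (h : p.dropLast.Nodup) (u v : V) :
    chi p u v = if (u, v) ∈ pathArcs p then 1 else 0 := by
  rcases em ((u,v) ∈ pathArcs p) with hm | hm
  · rw [chi, if_pos hm]
    have h1 : 0 < (pathArcs p).count (u, v) := List.count_pos_iff.2 hm
    have h2 := count_le_one_of_nodup (pathArcs_nodup h) (u, v)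
    omega
  · rw [chi, if_neg hm]
    exact List.count_eq_zero_of_not_mem hm

lemma mem_of_mem_pathArcs_fst {p : List V} {u v : V} (h : (u, v) ∈ pathArcs p) :
    u ∈ p.dropLast := by
  rw [← map_fst_pathArcs]; exact List.mem_map_of_mem h

lemma mem_of_mem_pathArcs_snd {p : List V} {u v : V} (h : (u, v) ∈ pathArcs p) :
    v ∈ p.tail := by
  rw [← map_snd_pathArcs]; exact List.mem_map_of_mem h

lemma chi_eq_zero_left {p : List V} {x : V} (h : x ∉ p) (v : V) : chi p x v = 0 := by
  rw [chi, List.count_eq_zero]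
  exact fun hm => h (List.dropLast_sublist p |>.mem (mem_of_mem_pathArcs_fst hm))

lemma chi_eq_zero_right {p : List V} {x : V} (h : x ∉ p) (v : V) : chi p v x = 0 := by
  rw [chi, List.count_eq_zero]
  exact fun hm => h (List.tail_sublist p |>.mem (mem_of_mem_pathArcs_snd hm))

lemma one_le_c_of_mem_pathArcs {N : Network V} {p : List V}
    (hc : p.Chain' fun u v => 1 ≤ N.c u v) {u v : V} (h : (u, v) ∈ pathArcs p) :
    1 ≤ N.c u v := chain'_of_pathArcs hc h

end NetFlowAux

namespace NetFlowAux
set_option linter.unusedSectionVars false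
open NetFlow

variable {V : Type*} [Fintype V] [DecidableEq V]

/-! ### Flows from sequences of paths and cycles -/

def sumChi (γ : List (List V)) (u v : V) : ℕ := (γ.map fun p => chi p u v).sum

@[simp] lemma sumChi_nil (u v : V) : sumChi ([] : List (List V)) u v = 0 := rfl

@[simp] lemma sumChi_cons (p : List V) (γ : List (List V)) (u v : V) :
    sumChi (p :: γ) u v = chi p u v + sumChi γ u v := rfl

lemma exz_add (f g : V → V → ℕ) (v : V) :
    exz (fun u w => f u w + g u w) v = exz f v + exz g v := by
  simp only [exz, outZ, inZ]
  push_cast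
  rw [Finset.sum_add_distrib, Finset.sum_add_distrib]
  ring

lemma exz_sumChi_paths {N : Network V} {y z : V} {γ : List (List V)}
    (hγ : ∀ p ∈ γ, IsPath N y z p) (v : V) :
    exz (sumChi γ) v = (γ.length : ℤ) * ((if v = y then 1 else 0) - (if v = z then 1 else 0)) := by
  induction γ with
  | nil => simp [exz, outZ, inZ, sumChi]
  | cons p γ ih =>
      have h1 : exz (sumChi (p :: γ)) v = exz (chi p) v + exz (sumChi γ) v := by
        rw [show sumChi (p :: γ) = fun u w => chi p u w + sumChi γ u w from rfl]
        exact exz_add _ _ v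
      rw [h1, exz_chi_path (hγ p (List.mem_cons_self)) v,
        ih (fun q hq => hγ q (List.mem_cons_of_mem p hq))]
      simp only [List.length_cons]
      push_cast
      ring

lemma exz_sumChi_cycles {N : Network V} {w : List (List V)}
    (hw : ∀ q ∈ w, IsCycle N q) (v : V) : exz (sumChi w) v = 0 := by
  induction w with
  | nil => simp [exz, outZ, inZ, sumChi]
  | cons q w ih =>
      have h1 : exz (sumChi (q :: w)) v = exz (chi q) v + exz (sumChi w) v := by
        rw [show sumChi (q :: w) = fun u t => chi q u t + sumChi w u t from rfl]
        exact exz_add _ _ v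
      rw [h1, exz_chi_cycle (hw q (List.mem_cons_self)) v,
        ih (fun r hr => hw r (List.mem_cons_of_mem q hr))]
      ring

lemma seqFlow_eq_sumChi {N : Network V} {y z : V} {γ : List (List V)}
    (hγ : ∀ p ∈ γ, IsPath N y z p) (u v : V) : seqFlow γ u v = sumChi γ u v := by
  induction γ with
  | nil => rfl
  | cons p γ ih =>
      have hnd : p.dropLast.Nodup :=
        (List.dropLast_sublist p).nodup (hγ p (List.mem_cons_self)).2.1
      rw [sumChi_cons, ← ih (fun q hq => hγ q (List.mem_cons_of_mem p hq))]
      simp only [seqFlow, List.countP_cons, chi_eq_ite hnd]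
      simp only [decide_eq_true_eq]
      omega

lemma conservation_of_exz {f : V → V → ℕ} {v : V} (h : exz f v = 0) :
    ∑ u, f u v = ∑ u, f v u := by
  simp only [exz, outZ, inZ, sub_eq_zero] at h
  exact_mod_cast h.symm

lemma isFlow_seqFlow {N : Network V} {y z : V} {γ : List (List V)}
    (hyz : y ≠ z) (h : IsPathSeq N y z γ) :
    IsFlow N y z (seqFlow γ) ∧ flowValue (seqFlow γ) y = (γ.length : ℤ) := by
  have hs : ∀ u v, seqFlow γ u v = sumChi γ u v := seqFlow_eq_sumChi h.1
  have hsf : seqFlow γ = sumChi γ := funext fun u => funext fun v => hs u v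
  constructor
  · refine ⟨h.2, fun v hv hv' => ?_⟩
    apply conservation_of_exz
    rw [hsf, exz_sumChi_paths h.1 v]
    simp [hv, hv']
  · rw [flowValue_eq_exz, hsf, exz_sumChi_paths h.1 y]
    simp [hyz]

lemma pathSeq_length_le {N : Network V} {y z : V} {γ : List (List V)}
    (hyz : y ≠ z) (h : IsPathSeq N y z γ) : γ.length ≤ maxFlowValue N y z := by
  obtain ⟨hf, hv⟩ := isFlow_seqFlow hyz h
  exact le_maxFlowValue hf hv

lemma seqSet_nonempty (N : Network V) (y z : V) :
    {m : ℕ | ∃ γ : List (List V), IsPathSeq N y z γ ∧ γ.length = m}.Nonempty :=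
  ⟨0, [], ⟨fun p hp => absurd hp List.not_mem_nil, fun u v => by simp⟩, rfl⟩

lemma seqSet_bddAbove (N : Network V) (y z : V) (hyz : y ≠ z) :
    BddAbove {m : ℕ | ∃ γ : List (List V), IsPathSeq N y z γ ∧ γ.length = m} := by
  refine ⟨maxFlowValue N y z, fun m hm => ?_⟩
  obtain ⟨γ, hγ, rfl⟩ := hm
  exact pathSeq_length_le hyz hγ

lemma exists_maxSeq (N : Network V) (y z : V) (hyz : y ≠ z) :
    ∃ γ, γ ∈ MaxSeqs N y z := by
  have := Nat.sSup_mem (seqSet_nonempty N y z) (seqSet_bddAbove N y z hyz)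
  obtain ⟨γ, hγ, hl⟩ := this
  exact ⟨γ, hγ, hl⟩

lemma maxSeqLen_le (N : Network V) (y z : V) (hyz : y ≠ z) :
    maxSeqLen N y z ≤ maxFlowValue N y z := by
  obtain ⟨γ, hγ, hl⟩ := exists_maxSeq N y z hyz
  rw [← hl]
  exact pathSeq_length_le hyz hγ

end NetFlowAux

namespace NetFlowAux
set_option linter.unusedSectionVars false
open NetFlow

variable {V : Type*} [Fintype V] [DecidableEq V]

/-! ### Walk extension machinery -/

def GoodCycle (R : V → V → Prop) (q : List V) : Prop :=
  3 ≤ q.length ∧ q.dropLast.Nodup ∧ q.head? = q.getLast? ∧ q.Chain' R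

lemma goodCycle_of (R : V → V → Prop) (hirr : ∀ v, ¬ R v v) {p : List V}
    (hc : p.Chain' R) (hnd : p.Nodup) {t u : V}
    (hlast : p.getLast? = some t) (hR : R t u) (hu : u ∈ p) : ∃ q, GoodCycle R q := by
  obtain ⟨l1, l2, rfl⟩ := List.append_of_mem hu
  have hl2 : l2 ≠ [] := by
    rintro rfl
    have : (l1 ++ [u]).getLast? = some u := List.getLast?_concat
    rw [hlast] at this
    exact hirr u (Option.some.inj this ▸ hR)
  have hchain2 : (u :: l2).Chain' R := (List.isChain_append.1 hc).2.1
  have hne2 : (u :: l2) ≠ [] := by simp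
  have hlast2 : (u :: l2).getLast? = some t := by
    have hx : (u :: l2).getLast? = some ((u :: l2).getLast hne2) :=
      List.getLast?_eq_getLast _
    rw [List.getLast?_append, hx] at hlast
    rw [hx]
    simpa using hlast
  refine ⟨(u :: l2) ++ [u], ?_, ?_, ?_, ?_⟩
  · simp only [List.length_append, List.length_cons, List.length_singleton]
    have : 1 ≤ l2.length := List.length_pos_iff.2 hl2
    omega
  · rw [List.dropLast_concat]
    exact ((List.sublist_append_right l1 _).nodup hnd)
  · rw [List.getLast?_concat]; rfl
  · simp only [List.Chain']; rw [List.isChain_append]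
    refine ⟨hchain2, List.isChain_singleton u, fun a ha b hb => ?_⟩
    rw [hlast2] at ha
    simp only [List.head?_cons, Option.mem_def, Option.some.injEq] at ha hb
    rw [← ha, ← hb]
    exact hR

lemma extend_chain (R : V → V → Prop) (hirr : ∀ v, ¬ R v v) :
    ∀ (n : ℕ) (p : List V), Fintype.card V ≤ p.length + n → p ≠ [] →
      p.Chain' R → p.Nodup →
      (∃ q, GoodCycle R q) ∨
      (∃ (q : List V) (t : V), q.Chain' R ∧ q.Nodup ∧ q.head? = p.head? ∧ q.getLast? = some t ∧
        ∀ u, ¬ R t u) := by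
  intro n
  induction n with
  | zero =>
      intro p hcard hne hc hnd
      have hmem : ∀ x : V, x ∈ p := by
        intro x
        have h1 : p.toFinset.card = p.length := List.toFinset_card_of_nodup hnd
        have h2 : p.toFinset.card ≤ Fintype.card V := Finset.card_le_card (Finset.subset_univ _)
        have h3 : p.toFinset = Finset.univ := Finset.eq_univ_of_card _ (by omega)
        have := Finset.mem_univ x
        rw [← h3, List.mem_toFinset] at this
        exact this
      set t := p.getLast hne with ht
      have hlast : p.getLast? = some t := List.getLast?_eq_getLast hne
      by_cases hsucc : ∃ u, R t u
      · obtain ⟨u, hu⟩ := hsucc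
        exact Or.inl (goodCycle_of R hirr hc hnd hlast hu (hmem u))
      · push_neg at hsucc
        exact Or.inr ⟨p, t, hc, hnd, rfl, hlast, hsucc⟩
  | succ n ih =>
      intro p hcard hne hc hnd
      set t := p.getLast hne with ht
      have hlast : p.getLast? = some t := List.getLast?_eq_getLast hne
      by_cases hsucc : ∃ u, R t u
      · obtain ⟨u, hu⟩ := hsucc
        by_cases hup : u ∈ p
        · exact Or.inl (goodCycle_of R hirr hc hnd hlast hu hup)
        · have hne' : p ++ [u] ≠ [] := by simp
          have hc' : (p ++ [u]).Chain' R := by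
            simp only [List.Chain']; rw [List.isChain_append]
            refine ⟨hc, List.isChain_singleton u, fun a ha b hb => ?_⟩
            rw [hlast] at ha
            simp only [List.head?_cons, Option.mem_def, Option.some.injEq] at ha hb
            rw [← ha, ← hb]; exact hu
          have hnd' : (p ++ [u]).Nodup := by
            rw [List.nodup_append]
            exact ⟨hnd, List.nodup_singleton u, by simpa using fun a ha (h : a = u) => hup (h ▸ ha)⟩
          have hcard' : Fintype.card V ≤ (p ++ [u]).length + n := by
            simp only [List.length_append, List.length_singleton]
            omega
          rcases ih (p ++ [u]) hcard' hne' hc' hnd' with h | ⟨q, t', h1, h2, h3, h4, h5⟩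
          · exact Or.inl h
          · refine Or.inr ⟨q, t', h1, h2, ?_, h4, h5⟩
            rw [h3, List.head?_append]
            cases p with
            | nil => exact absurd rfl hne
            | cons a l => rfl
      · push_neg at hsucc
        exact Or.inr ⟨p, t, hc, hnd, rfl, hlast, hsucc⟩

lemma count_tail_eq_dropLast_of_cycle {p : List V} (hh : p.head? = p.getLast?) (v : V) :
    p.tail.count v = p.dropLast.count v := by
  cases hp : p.head? with
  | none => rw [List.head?_eq_none_iff] at hp; subst hp; rfl
  | some a =>
      have h1 := count_head_tail hp v
      have h2 := count_dropLast_last (hh ▸ hp) v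
      omega

lemma cycle_tail_nodup {p : List V} (h : p.dropLast.Nodup) (hh : p.head? = p.getLast?) :
    p.tail.Nodup := by
  rw [List.nodup_iff_count_le_one] at h ⊢
  intro a
  rw [count_tail_eq_dropLast_of_cycle hh]
  exact h a

lemma goodCycle_reverse {R : V → V → Prop} {q : List V} (h : GoodCycle (flip R) q) :
    GoodCycle R q.reverse := by
  obtain ⟨h1, h2, h3, h4⟩ := h
  refine ⟨by simpa using h1, ?_, ?_, ?_⟩
  · rw [List.dropLast_reverse]
    exact List.nodup_reverse.2 (cycle_tail_nodup h2 h3)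
  · rw [List.head?_reverse, List.getLast?_reverse]
    exact h3.symm
  · simp only [List.Chain']; rw [List.isChain_reverse]
    exact h4
lemma extend_chain_back (R : V → V → Prop) (hirr : ∀ v, ¬ R v v)
    (p : List V) (hne : p ≠ []) (hc : p.Chain' R) (hnd : p.Nodup) :
    (∃ q, GoodCycle R q) ∨
    (∃ (q : List V) (s : V), q.Chain' R ∧ q.Nodup ∧ q.getLast? = p.getLast? ∧ q.head? = some s ∧
      ∀ u, ¬ R u s) := by
  have hirr' : ∀ v, ¬ flip R v v := hirr
  have hne' : p.reverse ≠ [] := by simpa using hne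
  have hc' : p.reverse.Chain' (flip R) := by
    simp only [List.Chain']; rw [List.isChain_reverse]
    exact hc
  rcases extend_chain (flip R) hirr' (Fintype.card V) p.reverse (by omega) hne' hc'
      (List.nodup_reverse.2 hnd) with h | ⟨q, t, h1, h2, h3, h4, h5⟩
  · obtain ⟨q, hq⟩ := h
    exact Or.inl ⟨q.reverse, goodCycle_reverse hq⟩
  · refine Or.inr ⟨q.reverse, t, ?_, List.nodup_reverse.2 h2, ?_, ?_, h5⟩
    · simp only [List.Chain']; rw [List.isChain_reverse]
      exact h1
    · rw [List.getLast?_reverse, h3, List.head?_reverse]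
    · rw [List.head?_reverse, h4]

end NetFlowAux

namespace NetFlowAux
set_option linter.unusedSectionVars false
open NetFlow

variable {V : Type*} [Fintype V] [DecidableEq V]

/-! ### Flow decomposition -/

def mass (f : V → V → ℕ) : ℕ := ∑ u, ∑ v, f u v

lemma le_mass (f : V → V → ℕ) (a b : V) : f a b ≤ mass f := by
  have h1 : f a b ≤ ∑ v, f a v :=
    Finset.single_le_sum (fun v _ => Nat.zero_le _) (Finset.mem_univ b)
  exact h1.trans (Finset.single_le_sum (f := fun u => ∑ v, f u v)
    (fun u _ => Nat.zero_le _) (Finset.mem_univ a))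

lemma mass_add (f g : V → V → ℕ) :
    mass (fun u v => f u v + g u v) = mass f + mass g := by
  simp [mass, Finset.sum_add_distrib]

lemma two_le_length_of_ne {q : List V} {a t : V}
    (h1 : q.head? = some a) (h2 : q.getLast? = some t) (hne : a ≠ t) : 2 ≤ q.length := by
  match q with
  | [] => simp at h1
  | [x] =>
      simp only [List.head?_cons, Option.some.injEq] at h1
      simp only [List.getLast?_singleton, Option.some.injEq] at h2
      exact absurd (h1.symm.trans h2) hne
  | x :: y :: l => simp

lemma getLast?_mem_tail {q : List V} (h2 : 2 ≤ q.length) {t : V}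
    (h : q.getLast? = some t) : t ∈ q.tail := by
  have h3 : q.tail.getLast? = some t := by
    rw [List.getLast?_tail, if_neg (by omega), h]
  have hne : q.tail ≠ [] := by
    rintro he
    rw [he] at h3
    simp at h3
  have := List.getLast?_eq_getLast hne
  rw [this] at h3
  exact (Option.some.inj h3) ▸ List.getLast_mem hne

lemma head?_mem_dropLast {q : List V} (h2 : 2 ≤ q.length) {s : V}
    (h : q.head? = some s) : s ∈ q.dropLast := by
  match q with
  | x :: y :: l =>
      simp only [List.head?_cons, Option.some.injEq] at h
      subst h
      simp [List.dropLast_cons₂]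

lemma exists_arc_into_last {q : List V} (h2 : 2 ≤ q.length) {t : V}
    (h : q.getLast? = some t) : ∃ s, (s, t) ∈ pathArcs q := by
  have := getLast?_mem_tail h2 h
  rw [← map_snd_pathArcs] at this
  obtain ⟨⟨s, t'⟩, hmem, ht'⟩ := List.mem_map.1 this
  exact ⟨s, by rwa [show t' = t from ht'] at hmem⟩

lemma exists_arc_from_head {q : List V} (h2 : 2 ≤ q.length) {s : V}
    (h : q.head? = some s) : ∃ u, (s, u) ∈ pathArcs q := by
  have := head?_mem_dropLast h2 h
  rw [← map_fst_pathArcs] at this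
  obtain ⟨⟨s', u⟩, hmem, hs'⟩ := List.mem_map.1 this
  exact ⟨u, by rwa [show s' = s from hs'] at hmem⟩

lemma exists_mem_pathArcs {q : List V} (h2 : 2 ≤ q.length) : ∃ a b, (a, b) ∈ pathArcs q := by
  match q with
  | x :: y :: l => exact ⟨x, y, by rw [pathArcs_cons₂]; exact List.mem_cons_self⟩

lemma single_le_inZ {f : V → V → ℕ} {s t : V} (h : 1 ≤ f s t) : 1 ≤ inZ f t := by
  have h6 : (f s t : ℤ) ≤ ∑ u, (f u t : ℤ) :=
    Finset.single_le_sum (f := fun u => (f u t : ℤ)) (fun u _ => by positivity)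
      (Finset.mem_univ s)
  have h7 : (1 : ℤ) ≤ (f s t : ℤ) := by exact_mod_cast h
  exact h7.trans h6

lemma single_le_outZ {f : V → V → ℕ} {s t : V} (h : 1 ≤ f s t) : 1 ≤ outZ f s := by
  have h6 : (f s t : ℤ) ≤ ∑ u, (f s u : ℤ) :=
    Finset.single_le_sum (f := fun u => (f s u : ℤ)) (fun u _ => by positivity)
      (Finset.mem_univ t)
  have h7 : (1 : ℤ) ≤ (f s t : ℤ) := by exact_mod_cast h
  exact h7.trans h6

/-- Subtracting the characteristic function of a walk in the support. -/
lemma sub_chi_flow {N : Network V} {y z : V} {f : V → V → ℕ} (hf : IsFlow N y z f)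
    {q : List V} (hnd : q.dropLast.Nodup) (hchain : q.Chain' fun u v => 1 ≤ f u v) :
    (∀ u v, f u v = (f u v - chi q u v) + chi q u v) ∧
    (∀ u v, f u v - chi q u v ≤ N.c u v) ∧
    (∀ v, exz f v = exz (fun u w => f u w - chi q u w) v + exz (chi q) v) := by
  have hle : ∀ u v, chi q u v ≤ f u v := by
    intro u v
    rw [chi_eq_ite hnd]
    split
    · exact chain'_of_pathArcs hchain ‹_›
    · exact Nat.zero_le _
  refine ⟨fun u v => (Nat.sub_add_cancel (hle u v)).symm,
    fun u v => (Nat.sub_le _ _).trans (hf.1 u v), fun v => ?_⟩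
  have heq : f = fun u w => (f u w - chi q u w) + chi q u w :=
    funext fun u => funext fun w => (Nat.sub_add_cancel (hle u w)).symm
  have h2 := exz_add (fun u w => f u w - chi q u w) (chi q) v
  rw [← heq] at h2
  exact h2

lemma flow_decomp {N : Network V} {y z : V} (hyz : y ≠ z) :
    ∀ (n : ℕ) (f : V → V → ℕ), mass f ≤ n → IsFlow N y z f → 0 ≤ flowValue f y →
      ∃ γ w, IsDecomposition N y z f γ w := by
  intro n
  induction n with
  | zero =>
      intro f hm hf hval
      have hf0 : ∀ u v, f u v = 0 := fun u v => by
        have := le_mass f u v; omega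
      refine ⟨[], [], by simp, by simp, ?_, fun u v => by simp [hf0 u v]⟩
      simp [flowValue, hf0]
  | succ n ih =>
      intro f hm hf hval
      by_cases hf0 : ∀ u v, f u v = 0
      · refine ⟨[], [], by simp, by simp, ?_, fun u v => by simp [hf0 u v]⟩
        simp [flowValue, hf0]
      push_neg at hf0
      obtain ⟨a, b, hab0⟩ := hf0
      have hab : 1 ≤ f a b := Nat.one_le_iff_ne_zero.2 hab0
      have hirr : ∀ v, ¬ (fun u v => 1 ≤ f u v) v v := by
        intro v hv
        have h1 : f v v ≤ N.c v v := hf.1 v v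
        rw [N.no_loop v] at h1
        omega
      -- the common cycle-removal step
      have cycleCase : ∀ q, GoodCycle (fun u v => 1 ≤ f u v) q →
          ∃ γ w, IsDecomposition N y z f γ w := by
        rintro q ⟨hq1, hq2, hq3, hq4⟩
        have hcyc : IsCycle N q := ⟨hq1, hq2, hq3, hq4.imp fun u v h => h.trans (hf.1 u v)⟩
        obtain ⟨hsum, hcap, hexz⟩ := sub_chi_flow hf hq2 hq4
        have hgflow : IsFlow N y z (fun u v => f u v - chi q u v) := by
          refine ⟨hcap, fun v hv hv' =>
            conservation_of_exz (f := fun u v => f u v - chi q u v) ?_⟩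
          have h1 := hexz v
          rw [exz_chi_cycle hcyc v, exz_eq_zero_of_flow hf hv hv'] at h1
          omega
        have hgval : flowValue (fun u v => f u v - chi q u v) y = flowValue f y := by
          have h1 := hexz y
          rw [exz_chi_cycle hcyc y] at h1
          simp only [flowValue_eq_exz] at *
          omega
        have hmassg : mass (fun u v => f u v - chi q u v) ≤ n := by
          have hfeq : f = fun u v => (f u v - chi q u v) + chi q u v :=
            funext fun u => funext fun v => hsum u v
          have h1 : mass f = mass (fun u v => f u v - chi q u v) + mass (chi q) := by
            conv_lhs => rw [hfeq]
            exact mass_add _ (chi q)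
          obtain ⟨a', b', hmem⟩ := exists_mem_pathArcs (by omega : 2 ≤ q.length)
          have h2 : 1 ≤ chi q a' b' := List.count_pos_iff.2 hmem
          have h3 := le_mass (chi q) a' b'
          omega
        obtain ⟨γ, w, d1, d2, d3, d4⟩ := ih _ hmassg hgflow (by rw [hgval]; exact hval)
        refine ⟨γ, q :: w, d1, ?_, by rw [d3, hgval], fun u v => ?_⟩
        · intro r hr
          rcases List.mem_cons.1 hr with rfl | hr
          · exact hcyc
          · exact d2 r hr
        · have hd : f u v - chi q u v
              = (List.map (fun p => chi p u v) γ).sum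
                + (List.map (fun r => chi r u v) w).sum := d4 u v
          simp only [List.map_cons, List.sum_cons]
          have hs := hsum u v
          omega
      have hchain0 : ([a, b] : List V).Chain' fun u v => 1 ≤ f u v := List.isChain_pair.2 hab
      have hab' : a ≠ b := by rintro rfl; exact hirr a hab
      have hnd0 : ([a, b] : List V).Nodup := by simp [hab']
      rcases extend_chain (fun u v => 1 ≤ f u v) hirr (Fintype.card V) [a, b]
        (by simp) (by simp) hchain0 hnd0 with
        ⟨q, hq⟩ | ⟨q, t, h1, h2, h3, h4, h5⟩
      · exact cycleCase q hq
      -- forward-maximal path: its endpoint must be z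
      have hha : q.head? = some a := by rw [h3]; rfl
      have hat : a ≠ t := by
        rintro rfl
        exact h5 b hab
      have hlen2 : 2 ≤ q.length := two_le_length_of_ne hha h4 hat
      obtain ⟨s0, hs0⟩ := exists_arc_into_last hlen2 h4
      have hfs0 : 1 ≤ f s0 t := chain'_of_pathArcs h1 hs0
      have hinZ : 1 ≤ inZ f t := single_le_inZ hfs0
      have houtZ : outZ f t = 0 := by
        rw [outZ]
        apply Finset.sum_eq_zero
        intro u _
        have h6 := h5 u
        simp only [not_le, Nat.lt_one_iff] at h6
        simp [h6]
      have hexzt : exz f t < 0 := by rw [exz, houtZ]; omega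
      have htz : t = z := by
        by_contra hne
        rcases eq_or_ne t y with rfl | hty
        · rw [flowValue_eq_exz] at hval; omega
        · rw [exz_eq_zero_of_flow hf hty hne] at hexzt; omega
      -- backward extension
      rcases extend_chain_back (fun u v => 1 ≤ f u v) hirr q
        (by rintro rfl; simp at hha) h1 h2 with
        ⟨q', hq'⟩ | ⟨q', s, g1, g2, g3, g4, g5⟩
      · exact cycleCase q' hq'
      rw [h4, htz] at g3
      rw [htz] at hinZ
      have hins : inZ f s = 0 := by
        rw [inZ]
        apply Finset.sum_eq_zero
        intro u _
        have h6 := g5 u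
        simp only [not_le, Nat.lt_one_iff] at h6
        simp [h6]
      have hsz : s ≠ z := by
        rintro rfl
        omega
      have hlen2' : 2 ≤ q'.length := two_le_length_of_ne g4 g3 hsz
      obtain ⟨u1, hu1⟩ := exists_arc_from_head hlen2' g4
      have hfu1 : 1 ≤ f s u1 := chain'_of_pathArcs g1 hu1
      have houts : 1 ≤ outZ f s := single_le_outZ hfu1
      have hexzs : 0 < exz f s := by rw [exz, hins]; omega
      have hsy : s = y := by
        by_contra hne
        rw [exz_eq_zero_of_flow hf hne hsz] at hexzs; omega
      rw [hsy] at g4 hins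
      have hpath : IsPath N y z q' :=
        ⟨hlen2', g2, g4, g3, g1.imp fun u v h => h.trans (hf.1 u v)⟩
      have hnd' : q'.dropLast.Nodup := (List.dropLast_sublist q').nodup g2
      obtain ⟨hsum, hcap, hexz⟩ := sub_chi_flow hf hnd' g1
      have hval1 : 1 ≤ flowValue f y := by
        rw [flowValue_eq_exz, exz, hins]
        have : 1 ≤ outZ f y := by rw [← hsy]; exact houts
        omega
      have hgflow : IsFlow N y z (fun u v => f u v - chi q' u v) := by
        refine ⟨hcap, fun v hv hv' =>
          conservation_of_exz (f := fun u v => f u v - chi q' u v) ?_⟩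
        have hh := hexz v
        rw [exz_chi_path hpath v, exz_eq_zero_of_flow hf hv hv'] at hh
        simp only [if_neg hv, if_neg hv'] at hh
        omega
      have hgval : flowValue (fun u v => f u v - chi q' u v) y = flowValue f y - 1 := by
        have hh := hexz y
        rw [exz_chi_path hpath y, if_pos rfl, if_neg hyz] at hh
        simp only [flowValue_eq_exz] at *
        omega
      have hmassg : mass (fun u v => f u v - chi q' u v) ≤ n := by
        have hfeq : f = fun u v => (f u v - chi q' u v) + chi q' u v :=
          funext fun u => funext fun v => hsum u v
        have hmm : mass f = mass (fun u v => f u v - chi q' u v) + mass (chi q') := by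
          conv_lhs => rw [hfeq]
          exact mass_add _ (chi q')
        obtain ⟨a', b', hmem⟩ := exists_mem_pathArcs hlen2'
        have h2' : 1 ≤ chi q' a' b' := List.count_pos_iff.2 hmem
        have h3' := le_mass (chi q') a' b'
        omega
      obtain ⟨γ, w, d1, d2, d3, d4⟩ := ih _ hmassg hgflow (by rw [hgval]; omega)
      refine ⟨q' :: γ, w, ?_, d2, ?_, fun u v => ?_⟩
      · intro r hr
        rcases List.mem_cons.1 hr with rfl | hr
        · exact hpath
        · exact d1 r hr
      · simp only [List.length_cons]
        push_cast
        omega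
      · have hd : f u v - chi q' u v
            = (List.map (fun p => chi p u v) γ).sum
              + (List.map (fun r => chi r u v) w).sum := d4 u v
        simp only [List.map_cons, List.sum_cons]
        have hs := hsum u v
        omega

end NetFlowAux

namespace NetFlowAux
set_option linter.unusedSectionVars false
open NetFlow

variable {V : Type*} [Fintype V] [DecidableEq V]

/-! ### Augmenting paths: existence -/

/-- The residual relation of a flow. -/
def Rf (N : Network V) (f : V → V → ℕ) (u v : V) : Prop :=
  f u v < N.c u v ∨ 0 < f v u

open Classical in
/-- If `z` is not residually reachable from `y`, then `f` is a maximum flow. -/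
lemma max_of_no_aug {N : Network V} {y z : V} {f g : V → V → ℕ} (hyz : y ≠ z)
    (hf : IsFlow N y z f) (hg : IsFlow N y z g)
    (hreach : ¬ Relation.ReflTransGen (Rf N f) y z) :
    flowValue g y ≤ flowValue f y := by
  set S : Finset V := Finset.univ.filter (fun v => Relation.ReflTransGen (Rf N f) y v)
    with hS
  have hyS : y ∈ S := by
    simp only [hS, Finset.mem_filter, Finset.mem_univ, true_and]
    exact Relation.ReflTransGen.refl
  have hzS : z ∉ S := by simp [hS, hreach]
  have hsat : ∀ v ∈ S, ∀ u ∉ S, f v u = N.c v u ∧ f u v = 0 := by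
    intro v hv u hu
    have hnR : ¬ Rf N f v u := by
      intro hR
      apply hu
      simp only [hS, Finset.mem_filter, Finset.mem_univ, true_and] at hv ⊢
      exact hv.tail hR
    rw [Rf] at hnR
    push_neg at hnR
    have h1 := hf.1 v u
    omega
  -- the cut identity
  have cut : ∀ h : V → V → ℕ, IsFlow N y z h →
      flowValue h y = (∑ v ∈ S, ∑ u ∈ Sᶜ, (h v u : ℤ)) - ∑ v ∈ S, ∑ u ∈ Sᶜ, (h u v : ℤ) := by
    intro h hh
    have h1 : flowValue h y = ∑ v ∈ S, exz h v := by
      rw [flowValue_eq_exz]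
      rw [Finset.sum_eq_single_of_mem y hyS]
      intro v hv hvy
      refine exz_eq_zero_of_flow hh hvy (fun hvz => hzS (hvz ▸ hv))
    have h2 : ∀ k : V → V → ℤ, ∑ v ∈ S, ∑ u, k v u
        = (∑ v ∈ S, ∑ u ∈ S, k v u) + ∑ v ∈ S, ∑ u ∈ Sᶜ, k v u := by
      intro k
      rw [← Finset.sum_add_distrib]
      congr 1
      ext v
      exact (Finset.sum_add_sum_compl S _).symm
    have h3 : ∑ v ∈ S, ∑ u ∈ S, (h v u : ℤ) = ∑ v ∈ S, ∑ u ∈ S, (h u v : ℤ) :=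
      Finset.sum_comm
    have h4 : ∑ v ∈ S, outZ h v
        = (∑ v ∈ S, ∑ u ∈ S, (h v u : ℤ)) + ∑ v ∈ S, ∑ u ∈ Sᶜ, (h v u : ℤ) := h2 _
    have h5 : ∑ v ∈ S, inZ h v
        = (∑ v ∈ S, ∑ u ∈ S, (h u v : ℤ)) + ∑ v ∈ S, ∑ u ∈ Sᶜ, (h u v : ℤ) := h2 _
    have h6 : ∑ v ∈ S, exz h v = ∑ v ∈ S, outZ h v - ∑ v ∈ S, inZ h v := by
      rw [← Finset.sum_sub_distrib]; rfl
    rw [h1, h6, h4, h5, h3]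
    ring
  have hcg := cut g hg
  have hcf := cut f hf
  have hA : ∑ v ∈ S, ∑ u ∈ Sᶜ, (g v u : ℤ) ≤ ∑ v ∈ S, ∑ u ∈ Sᶜ, (f v u : ℤ) := by
    refine Finset.sum_le_sum fun v hv => Finset.sum_le_sum fun u hu => ?_
    rw [(hsat v hv u (Finset.mem_compl.1 hu)).1]
    exact_mod_cast hg.1 v u
  have hBf : ∑ v ∈ S, ∑ u ∈ Sᶜ, (f u v : ℤ) = 0 := by
    refine Finset.sum_eq_zero fun v hv => Finset.sum_eq_zero fun u hu => ?_
    rw [(hsat v hv u (Finset.mem_compl.1 hu)).2]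
    rfl
  have hBg : 0 ≤ ∑ v ∈ S, ∑ u ∈ Sᶜ, (g u v : ℤ) := by
    refine Finset.sum_nonneg fun v _ => Finset.sum_nonneg fun u _ => by positivity
  omega

lemma getLast?_append_right {l l' : List V} (h : l' ≠ []) :
    (l ++ l').getLast? = l'.getLast? := by
  rw [List.getLast?_append, List.getLast?_eq_getLast h, Option.or]

/-- Any chain can be shortened to a `Nodup` chain with the same endpoints. -/
lemma nodup_chain_of_chain {R : V → V → Prop} :
    ∀ (n : ℕ) (p : List V), p.length ≤ n → p.Chain' R → p ≠ [] →
      ∃ q : List V, q.Chain' R ∧ q.Nodup ∧ q ≠ [] ∧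
        q.head? = p.head? ∧ q.getLast? = p.getLast? := by
  intro n
  induction n with
  | zero => intro p hl _ hne; cases p with
      | nil => exact absurd rfl hne
      | cons a l => simp at hl
  | succ n ih =>
      intro p hl hc hne
      by_cases hnd : p.Nodup
      · exact ⟨p, hc, hnd, hne, rfl, rfl⟩
      · -- find a duplicate
        obtain ⟨a, ha⟩ : ∃ a, ¬ p.count a ≤ 1 := by
          by_contra hall
          push_neg at hall
          exact hnd (List.nodup_iff_count_le_one.2 fun a => by
            have := hall a; omega)
        have ha2 : 2 ≤ p.count a := by omega
        have hmem : a ∈ p := by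
          rw [← List.count_pos_iff]
          omega
        obtain ⟨l1', r', rfl⟩ := List.append_of_mem hmem
        obtain ⟨l1, l2, l3, hdec⟩ : ∃ l1 l2 l3 : List V,
            l1' ++ a :: r' = l1 ++ a :: (l2 ++ a :: l3) := by
          rcases em (a ∈ r') with h | h
          · obtain ⟨l2, l3, rfl⟩ := List.append_of_mem h
            exact ⟨l1', l2, l3, rfl⟩
          · have hr0 : r'.count a = 0 := List.count_eq_zero.2 h
            have hl1 : a ∈ l1' := by
              by_contra h1
              have h2 : l1'.count a = 0 := List.count_eq_zero.2 h1
              rw [List.count_append, List.count_cons_self, hr0, h2] at ha2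
              omega
            obtain ⟨u, v, rfl⟩ := List.append_of_mem hl1
            exact ⟨u, v, r', by simp⟩
        rw [hdec] at hc hl ⊢
        -- shorten: l1 ++ a :: l3
        have hc1 : (l1 ++ a :: l3).Chain' R := by
          simp only [List.Chain'] at hc ⊢; rw [List.isChain_append] at hc ⊢
          obtain ⟨c1, c2, c3⟩ := hc
          have c2' : (a :: (l2 ++ a :: l3)).Chain' R := c2
          have : ((a :: l2) ++ (a :: l3)).Chain' R := by
            rw [show (a :: l2) ++ (a :: l3) = a :: (l2 ++ a :: l3) by simp]
            exact c2
          simp only [List.Chain'] at this; rw [List.isChain_append] at this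
          exact ⟨c1, this.2.1, by
            intro xx hxx yy hyy
            exact c3 xx hxx yy (by simpa using hyy)⟩
        have hlen : (l1 ++ a :: l3).length ≤ n := by
          simp only [List.length_append, List.length_cons] at hl ⊢
          omega
        obtain ⟨q, e1, e2, e3, e4, e5⟩ := ih (l1 ++ a :: l3) hlen hc1 (by simp)
        refine ⟨q, e1, e2, e3, ?_, ?_⟩
        · rw [e4]
          cases l1 with
          | nil => rfl
          | cons b l => rfl
        · rw [e5, getLast?_append_right (by simp : (a :: l3 : List V) ≠ []),
            getLast?_append_right (l' := a :: (l2 ++ a :: l3)) (by simp),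
            show (a : V) :: (l2 ++ a :: l3) = (a :: l2) ++ (a :: l3) by simp,
            getLast?_append_right (by simp : (a :: l3 : List V) ≠ [])]

/-- If the flow is not maximum, there is a `Nodup` residual chain from `y` to `z`. -/
lemma exists_aug_chain {N : Network V} {y z : V} {f : V → V → ℕ} (hyz : y ≠ z)
    (hf : IsFlow N y z f) (hlt : flowValue f y < (maxFlowValue N y z : ℤ)) :
    ∃ p : List V, p.Chain' (Rf N f) ∧ p.Nodup ∧ p.head? = some y ∧
      p.getLast? = some z := by
  obtain ⟨g, hg, hgv⟩ := exists_isMaxFlow N y z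
  have hreach : Relation.ReflTransGen (Rf N f) y z := by
    by_contra hnr
    have := max_of_no_aug hyz hf hg hnr
    omega
  obtain ⟨l, hl1, hl2⟩ := List.exists_isChain_cons_of_relationReflTransGen hreach
  have hc : (y :: l).Chain' (Rf N f) := hl1
  obtain ⟨q, e1, e2, e3, e4, e5⟩ :=
    nodup_chain_of_chain (R := Rf N f) (y :: l).length (y :: l) le_rfl hc (by simp)
  refine ⟨q, e1, e2, by rw [e4]; rfl, ?_⟩
  rw [e5, List.getLast?_eq_getLast (by simp), hl2]

end NetFlowAux

namespace NetFlowAux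
set_option linter.unusedSectionVars false
open NetFlow

variable {V : Type*} [Fintype V] [DecidableEq V]

/-! ### Augmenting along a chain -/

lemma sum_ite_one (b : V) : ∑ u, (if u = b then (1:ℤ) else 0) = 1 := by
  simp

lemma outZ_if_add (g : V → V → ℕ) (a b v : V) :
    outZ (fun u w => if u = a ∧ w = b then g u w + 1 else g u w) v
      = outZ g v + (if v = a then 1 else 0) := by
  by_cases hva : v = a
  · have h1 : ∀ u : V, ((if v = a ∧ u = b then g v u + 1 else g v u : ℕ) : ℤ)
        = (g v u : ℤ) + (if u = b then 1 else 0) := by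
      intro u
      rcases eq_or_ne u b with rfl | h
      · rw [if_pos ⟨hva, rfl⟩, if_pos rfl]; push_cast; ring
      · rw [if_neg (fun hc => h hc.2), if_neg h]; ring
    simp only [outZ]
    rw [Finset.sum_congr rfl fun u _ => h1 u, Finset.sum_add_distrib, sum_ite_one b,
      if_pos hva]
  · simp only [outZ, if_neg hva]
    have h1 : ∀ u : V, ((if v = a ∧ u = b then g v u + 1 else g v u : ℕ) : ℤ)
        = (g v u : ℤ) := by intro u; simp [hva]
    rw [Finset.sum_congr rfl fun u _ => h1 u]
    ring

lemma inZ_if_add (g : V → V → ℕ) (a b v : V) :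
    inZ (fun u w => if u = a ∧ w = b then g u w + 1 else g u w) v
      = inZ g v + (if v = b then 1 else 0) := by
  by_cases hvb : v = b
  · have h1 : ∀ u : V, ((if u = a ∧ v = b then g u v + 1 else g u v : ℕ) : ℤ)
        = (g u v : ℤ) + (if u = a then 1 else 0) := by
      intro u
      rcases eq_or_ne u a with rfl | h
      · rw [if_pos ⟨rfl, hvb⟩, if_pos rfl]; push_cast; ring
      · rw [if_neg (fun hc => h hc.1), if_neg h]; ring
    simp only [inZ]
    rw [Finset.sum_congr rfl fun u _ => h1 u, Finset.sum_add_distrib, sum_ite_one a,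
      if_pos hvb]
  · simp only [inZ, if_neg hvb]
    have h1 : ∀ u : V, ((if u = a ∧ v = b then g u v + 1 else g u v : ℕ) : ℤ)
        = (g u v : ℤ) := by intro u; simp [hvb]
    rw [Finset.sum_congr rfl fun u _ => h1 u]
    ring

lemma outZ_if_sub (g : V → V → ℕ) (a b v : V) (hpos : 1 ≤ g a b) :
    outZ (fun u w => if u = a ∧ w = b then g u w - 1 else g u w) v
      = outZ g v - (if v = a then 1 else 0) := by
  by_cases hva : v = a
  · have h1 : ∀ u : V, ((if v = a ∧ u = b then g v u - 1 else g v u : ℕ) : ℤ)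
        = (g v u : ℤ) - (if u = b then 1 else 0) := by
      intro u
      rcases eq_or_ne u b with rfl | h
      · rw [if_pos ⟨hva, rfl⟩, if_pos rfl]
        subst hva
        rw [Nat.cast_sub hpos]
        push_cast
        ring
      · rw [if_neg (fun hc => h hc.2), if_neg h]; ring
    simp only [outZ]
    rw [Finset.sum_congr rfl fun u _ => h1 u, Finset.sum_sub_distrib, sum_ite_one b,
      if_pos hva]
  · simp only [outZ, if_neg hva]
    have h1 : ∀ u : V, ((if v = a ∧ u = b then g v u - 1 else g v u : ℕ) : ℤ)
        = (g v u : ℤ) := by intro u; simp [hva]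
    rw [Finset.sum_congr rfl fun u _ => h1 u]
    ring

lemma inZ_if_sub (g : V → V → ℕ) (a b v : V) (hpos : 1 ≤ g a b) :
    inZ (fun u w => if u = a ∧ w = b then g u w - 1 else g u w) v
      = inZ g v - (if v = b then 1 else 0) := by
  by_cases hvb : v = b
  · have h1 : ∀ u : V, ((if u = a ∧ v = b then g u v - 1 else g u v : ℕ) : ℤ)
        = (g u v : ℤ) - (if u = a then 1 else 0) := by
      intro u
      rcases eq_or_ne u a with rfl | h
      · rw [if_pos ⟨rfl, hvb⟩, if_pos rfl]
        subst hvb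
        rw [Nat.cast_sub hpos]
        push_cast
        ring
      · rw [if_neg (fun hc => h hc.1), if_neg h]; ring
    simp only [inZ]
    rw [Finset.sum_congr rfl fun u _ => h1 u, Finset.sum_sub_distrib, sum_ite_one a,
      if_pos hvb]
  · simp only [inZ, if_neg hvb]
    have h1 : ∀ u : V, ((if u = a ∧ v = b then g u v - 1 else g u v : ℕ) : ℤ)
        = (g u v : ℤ) := by intro u; simp [hvb]
    rw [Finset.sum_congr rfl fun u _ => h1 u]
    ring

lemma aug_chain {N : Network V} {f : V → V → ℕ} (hcap : ∀ u v, f u v ≤ N.c u v) :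
    ∀ (p : List V) (hd lt : V), p.Chain' (Rf N f) → p.Nodup → p.head? = some hd →
      p.getLast? = some lt →
      ∃ f' : V → V → ℕ,
        (∀ u v, f' u v ≤ N.c u v) ∧
        (∀ v, exz f' v = exz f v + (if v = hd then 1 else 0) - (if v = lt then 1 else 0)) ∧
        (∀ v, outZ f' v ≤ outZ f v + (if v ∈ p then 1 else 0)) ∧
        (∀ u v, u ∉ p → f' u v = f u v) ∧ (∀ u v, v ∉ p → f' u v = f u v)
  | [], hd, lt, _, _, hh, _ => by simp at hh
  | [a], hd, lt, _, _, hh, hl => by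
      simp only [List.head?_cons, Option.some.injEq] at hh
      simp only [List.getLast?_singleton, Option.some.injEq] at hl
      refine ⟨f, hcap, fun v => by rw [← hh, ← hl]; ring, fun v => ?_, fun _ _ _ => rfl,
        fun _ _ _ => rfl⟩
      have : (0:ℤ) ≤ if v ∈ [a] then 1 else 0 := by split <;> norm_num
      omega
  | a :: b :: l, hd, lt, hc, hnd, hh, hl => by
      simp only [List.head?_cons, Option.some.injEq] at hh
      obtain ⟨hab, hcq⟩ := List.isChain_cons_cons.1 hc
      obtain ⟨hanin, hndq⟩ := List.nodup_cons.1 hnd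
      have hlq : (b :: l).getLast? = some lt := by
        rwa [List.getLast?_cons_cons] at hl
      obtain ⟨f'', cap'', exz'', out'', unchL'', unchR''⟩ :=
        aug_chain hcap (b :: l) b lt hcq hndq rfl hlq
      have hfab : f'' a b = f a b := unchL'' a b hanin
      have hfba : f'' b a = f b a := unchR'' b a hanin
      rcases hab with hfwd | hbwd
      · -- forward arc (a, b)
        refine ⟨fun u w => if u = a ∧ w = b then f'' u w + 1 else f'' u w,
          fun u v => ?_, fun v => ?_, fun v => ?_, fun u v hu => ?_, fun u v hv => ?_⟩
        · show (if u = a ∧ v = b then f'' u v + 1 else f'' u v) ≤ N.c u v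
          by_cases h : u = a ∧ v = b
          · obtain ⟨rfl, rfl⟩ := h
            rw [if_pos ⟨rfl, rfl⟩, hfab]
            omega
          · rw [if_neg h]; exact cap'' u v
        · have h1 := exz'' v
          simp only [exz] at h1 ⊢
          rw [outZ_if_add, inZ_if_add, ← hh]
          omega
        · rw [outZ_if_add]
          have h1 := out'' v
          have h4 : (if v = a then (1:ℤ) else 0) + (if v ∈ b :: l then 1 else 0)
              ≤ (if v ∈ a :: b :: l then 1 else 0) := by
            by_cases hva : v = a
            · rw [if_pos hva, if_neg (fun h => hanin (hva ▸ h)),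
                if_pos (by rw [hva]; exact List.mem_cons_self)]
              norm_num
            · rw [if_neg hva]
              by_cases hm : v ∈ b :: l
              · rw [if_pos hm, if_pos (List.mem_cons_of_mem a hm)]
                norm_num
              · rw [if_neg hm, if_neg (by simp [hva, hm])]
                norm_num
          omega
        · show (if u = a ∧ v = b then f'' u v + 1 else f'' u v) = f u v
          have hu' : u ∉ b :: l := fun h => hu (List.mem_cons_of_mem a h)
          have hua : u ≠ a := fun h => hu (h ▸ List.mem_cons_self)
          rw [if_neg (fun h => hua h.1), unchL'' u v hu']
        · show (if u = a ∧ v = b then f'' u v + 1 else f'' u v) = f u v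
          have hv' : v ∉ b :: l := fun h => hv (List.mem_cons_of_mem a h)
          have hvb : v ≠ b := fun h => hv (by rw [h]; exact List.mem_cons_of_mem a (List.mem_cons_self))
          rw [if_neg (fun h => hvb h.2), unchR'' u v hv']
      · -- backward arc (b, a)
        have hpos : 1 ≤ f'' b a := by omega
        refine ⟨fun u w => if u = b ∧ w = a then f'' u w - 1 else f'' u w,
          fun u v => ?_, fun v => ?_, fun v => ?_, fun u v hu => ?_, fun u v hv => ?_⟩
        · show (if u = b ∧ v = a then f'' u v - 1 else f'' u v) ≤ N.c u v
          by_cases h : u = b ∧ v = a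
          · rw [if_pos h]
            exact (Nat.sub_le _ _).trans (cap'' u v)
          · rw [if_neg h]; exact cap'' u v
        · have h1 := exz'' v
          simp only [exz] at h1 ⊢
          rw [outZ_if_sub f'' b a v hpos, inZ_if_sub f'' b a v hpos, ← hh]
          omega
        · rw [outZ_if_sub f'' b a v hpos]
          have h1 := out'' v
          have h2 : (0:ℤ) ≤ if v = b then 1 else 0 := by split <;> norm_num
          have h3 : (if v ∈ b :: l then (1:ℤ) else 0)
              ≤ (if v ∈ a :: b :: l then 1 else 0) := by
            by_cases hm : v ∈ b :: l
            · rw [if_pos hm, if_pos (List.mem_cons_of_mem a hm)]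
            · rw [if_neg hm]
              split <;> norm_num
          omega
        · show (if u = b ∧ v = a then f'' u v - 1 else f'' u v) = f u v
          have hu' : u ∉ b :: l := fun h => hu (List.mem_cons_of_mem a h)
          have hub : u ≠ b := fun h =>
            hu (by rw [h]; exact List.mem_cons_of_mem a (List.mem_cons_self))
          rw [if_neg (fun h => hub h.1), unchL'' u v hu']
        · show (if u = b ∧ v = a then f'' u v - 1 else f'' u v) = f u v
          have hv' : v ∉ b :: l := fun h => hv (List.mem_cons_of_mem a h)
          have hva : v ≠ a := fun h => hv (h ▸ List.mem_cons_self)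
          rw [if_neg (fun h => hva h.2), unchR'' u v hv']

end NetFlowAux

namespace NetFlowAux
set_option linter.unusedSectionVars false
open NetFlow

variable {V : Type*} [Fintype V] [DecidableEq V]

lemma removeVerts_le (N : Network V) (X : Finset V) (u v : V) :
    (removeVerts N X).c u v ≤ N.c u v := by
  show (if u ∈ X ∨ v ∈ X then 0 else N.c u v) ≤ N.c u v
  split <;> omega

lemma isFlow_of_removeVerts {N : Network V} {X : Finset V} {y z : V} {f : V → V → ℕ}
    (hf : IsFlow (removeVerts N X) y z f) : IsFlow N y z f :=
  ⟨fun u v => (hf.1 u v).trans (removeVerts_le N X u v), hf.2⟩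

lemma aug_step {N : Network V} {y z : V} {f : V → V → ℕ} (hyz : y ≠ z)
    (hf : IsFlow N y z f) (hlt : flowValue f y < (maxFlowValue N y z : ℤ)) :
    ∃ f', IsFlow N y z f' ∧ flowValue f' y = flowValue f y + 1 ∧
      ∀ v, outZ f' v ≤ outZ f v + 1 := by
  obtain ⟨p, pc, pnd, ph, pl⟩ := exists_aug_chain hyz hf hlt
  obtain ⟨f', cap, hexz, hout, -, -⟩ := aug_chain hf.1 p y z pc pnd ph pl
  refine ⟨f', ⟨cap, fun v hv hv' =>
      conservation_of_exz (f := f') ?_⟩, ?_, fun v => ?_⟩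
  · rw [hexz v, if_neg hv, if_neg hv', exz_eq_zero_of_flow hf hv hv']
    ring
  · rw [flowValue_eq_exz, flowValue_eq_exz, hexz y, if_pos rfl, if_neg hyz]
    ring
  · have h1 := hout v
    have h2 : (if v ∈ p then (1:ℤ) else 0) ≤ 1 := by split <;> norm_num
    omega

lemma iterate_aug {N : Network V} {y z : V} (hyz : y ≠ z) (x : V) (g0 : V → V → ℕ)
    (hg0 : IsFlow N y z g0) (m0 : ℕ) (hv0 : flowValue g0 y = (m0 : ℤ))
    (hx0 : outZ g0 x = 0) :
    ∀ k : ℕ, m0 + k ≤ maxFlowValue N y z →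
      ∃ f, IsFlow N y z f ∧ flowValue f y = ((m0 + k : ℕ) : ℤ) ∧ outZ f x ≤ (k : ℤ) := by
  intro k
  induction k with
  | zero => exact fun _ => ⟨g0, hg0, by simpa using hv0, by simp [hx0]⟩
  | succ k ih =>
      intro hk
      obtain ⟨f, hf, hfv, hfx⟩ := ih (by omega)
      have hlt : flowValue f y < (maxFlowValue N y z : ℤ) := by
        rw [hfv]
        exact_mod_cast (by omega : m0 + k < maxFlowValue N y z)
      obtain ⟨f', h1, h2, h3⟩ := aug_step hyz hf hlt
      refine ⟨f', h1, ?_, ?_⟩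
      · rw [h2, hfv]; push_cast; ring
      · have := h3 x; push_cast; omega

lemma outZ_zero_removeVerts {N : Network V} {X : Finset V} {y z : V} {f : V → V → ℕ}
    (hf : IsFlow (removeVerts N X) y z f) {x : V} (hx : x ∈ X) : outZ f x = 0 := by
  rw [outZ]
  refine Finset.sum_eq_zero fun u _ => ?_
  have h := hf.1 x u
  have h2 : (removeVerts N X).c x u = 0 := by
    show (if x ∈ X ∨ u ∈ X then 0 else N.c x u) = 0
    rw [if_pos (Or.inl hx)]
  rw [h2] at h
  simp [Nat.le_zero.1 h]

lemma maxFlowValue_removeVerts_le (N : Network V) (X : Finset V) (y z : V) :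
    maxFlowValue (removeVerts N X) y z ≤ maxFlowValue N y z := by
  obtain ⟨g, hg, hgv⟩ := exists_isMaxFlow (removeVerts N X) y z
  exact le_maxFlowValue (isFlow_of_removeVerts hg) hgv

lemma exists_good_maxflow (N : Network V) (y z x : V) (hyz : y ≠ z) :
    ∃ f, IsMaxFlow N y z f ∧
      outZ f x ≤ (maxFlowValue N y z : ℤ) - (maxFlowValue (removeVerts N {x}) y z : ℤ) := by
  obtain ⟨g0, hg0f, hg0v⟩ := exists_isMaxFlow (removeVerts N {x}) y z
  have hg0' : IsFlow N y z g0 := isFlow_of_removeVerts hg0f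
  have hx0 : outZ g0 x = 0 := outZ_zero_removeVerts hg0f (Finset.mem_singleton_self x)
  have hle : maxFlowValue (removeVerts N {x}) y z ≤ maxFlowValue N y z :=
    maxFlowValue_removeVerts_le N {x} y z
  obtain ⟨f, hf, hfv, hfx⟩ := iterate_aug hyz x g0 hg0' _ hg0v hx0
    (maxFlowValue N y z - maxFlowValue (removeVerts N {x}) y z) (by omega)
  refine ⟨f, ⟨hf, ?_⟩, ?_⟩
  · rw [hfv]
    congr 1
    omega
  · refine hfx.trans ?_
    rw [Nat.cast_sub hle]

end NetFlowAux

namespace NetFlowAux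
set_option linter.unusedSectionVars false
open NetFlow

variable {V : Type*} [Fintype V] [DecidableEq V]

/-! ### Support for the main theorem -/

lemma mem_of_getLast? {l : List V} {t : V} (h : l.getLast? = some t) : t ∈ l := by
  have hne : l ≠ [] := by rintro rfl; simp at h
  rw [List.getLast?_eq_getLast hne] at h
  exact (Option.some.inj h) ▸ List.getLast_mem hne

lemma chain'_congr_mem {R S : V → V → Prop} :
    ∀ {p : List V}, p.Chain' R → (∀ a b, (a, b) ∈ pathArcs p → R a b → S a b) → p.Chain' S
  | [], _, _ => List.isChain_nil
  | [_], _, _ => List.isChain_singleton _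
  | a :: b :: l, hc, himp => by
      simp only [List.Chain'] at hc ⊢; rw [List.isChain_cons_cons] at hc ⊢
      refine ⟨himp a b (by rw [pathArcs_cons₂]; exact List.mem_cons_self) hc.1, ?_⟩
      exact chain'_congr_mem hc.2 fun u v hm hr =>
        himp u v (by rw [pathArcs_cons₂]; exact List.mem_cons_of_mem _ hm) hr

lemma any_mem_singleton (x : V) (p : List V) :
    (p.any fun v => decide (v ∈ ({x} : Finset V))) = decide (x ∈ p) := by
  rw [Bool.eq_iff_iff]
  simp only [List.any_eq_true, decide_eq_true_eq, Finset.mem_singleton]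
  constructor
  · rintro ⟨v, hv, rfl⟩
    exact hv
  · intro h
    exact ⟨x, h, rfl⟩

lemma lX_singleton (x : V) (γ : List (List V)) :
    lX {x} γ = γ.countP fun p => decide (x ∈ p) :=
  List.countP_congr fun p _ => by rw [any_mem_singleton]

lemma sumChi_filter_le (q : List V → Bool) (γ : List (List V)) (u v : V) :
    sumChi (γ.filter q) u v ≤ sumChi γ u v := by
  induction γ with
  | nil => simp
  | cons p γ ih =>
      rw [List.filter_cons]
      split
      · rw [sumChi_cons, sumChi_cons]
        omega
      · rw [sumChi_cons]
        omega

lemma sumChi_zero_left {γ : List (List V)} {x : V} (h : ∀ p ∈ γ, x ∉ p) (v : V) :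
    sumChi γ x v = 0 := by
  induction γ with
  | nil => rfl
  | cons p γ ih =>
      rw [sumChi_cons, chi_eq_zero_left (h p (List.mem_cons_self)) v,
        ih fun r hr => h r (List.mem_cons_of_mem p hr)]

lemma sumChi_zero_right {γ : List (List V)} {x : V} (h : ∀ p ∈ γ, x ∉ p) (v : V) :
    sumChi γ v x = 0 := by
  induction γ with
  | nil => rfl
  | cons p γ ih =>
      rw [sumChi_cons, chi_eq_zero_right (h p (List.mem_cons_self)) v,
        ih fun r hr => h r (List.mem_cons_of_mem p hr)]

lemma mem_dropLast_of_ne_last {p : List V} {x z : V} (hx : x ∈ p)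
    (hl : p.getLast? = some z) (hne : x ≠ z) : x ∈ p.dropLast := by
  have h1 := count_dropLast_last hl x
  rw [if_neg hne] at h1
  have h2 : 0 < p.count x := List.count_pos_iff.2 hx
  exact List.count_pos_iff.1 (by omega)

lemma countP_mem_le_outsum {N : Network V} {y z x : V} (hxz : x ≠ z) :
    ∀ γ : List (List V), (∀ p ∈ γ, IsPath N y z p) →
      (γ.countP fun p => decide (x ∈ p)) ≤ ∑ u, sumChi γ x u := by
  intro γ
  induction γ with
  | nil => intro _; simp
  | cons p γ ih =>
      intro hγ
      have h1 : ∑ u, sumChi (p :: γ) x u = p.dropLast.count x + ∑ u, sumChi γ x u := by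
        simp only [sumChi_cons, Finset.sum_add_distrib, chi_out_sum]
      rw [h1, List.countP_cons]
      have h2 := ih fun r hr => hγ r (List.mem_cons_of_mem p hr)
      by_cases hm : x ∈ p
      · have h3 : x ∈ p.dropLast :=
          mem_dropLast_of_ne_last hm (hγ p (List.mem_cons_self)).2.2.2.1 hxz
        have h4 : 0 < p.dropLast.count x := List.count_pos_iff.2 h3
        have hd : (if decide (x ∈ p) = true then 1 else 0) = 1 := by
          simp [hm]
        omega
      · have hd : (if decide (x ∈ p) = true then 1 else 0) = 0 := by
          simp [hm]
        omega

lemma pathSeq_of_decomp {N : Network V} {y z : V} {f : V → V → ℕ} {γ w : List (List V)}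
    (hf : IsFlow N y z f) (hd : IsDecomposition N y z f γ w) : IsPathSeq N y z γ := by
  obtain ⟨d1, d2, d3, d4⟩ := hd
  refine ⟨d1, fun u v => ?_⟩
  have h1 : seqFlow γ u v = sumChi γ u v := seqFlow_eq_sumChi d1 u v
  have h2 : f u v = sumChi γ u v + sumChi w u v := d4 u v
  have h3 := hf.1 u v
  show seqFlow γ u v ≤ N.c u v
  omega

lemma maxSeqLen_eq (N : Network V) (y z : V) (hyz : y ≠ z) :
    maxSeqLen N y z = maxFlowValue N y z := by
  refine le_antisymm (maxSeqLen_le N y z hyz) ?_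
  obtain ⟨f, hf, hfv⟩ := exists_isMaxFlow N y z
  obtain ⟨γ, w, hdec⟩ := flow_decomp hyz (mass f) f le_rfl hf (by rw [hfv]; positivity)
  have hps : IsPathSeq N y z γ := pathSeq_of_decomp hf ⟨hdec.1, hdec.2.1, hdec.2.2.1, hdec.2.2.2⟩
  have hlen : γ.length = maxFlowValue N y z := by
    have := hdec.2.2.1
    rw [hfv] at this
    exact_mod_cast this
  rw [← hlen]
  exact le_csSup (seqSet_bddAbove N y z hyz) ⟨γ, hps, rfl⟩

/-- Lower bound: `φ ≤ φ' + l_x(γ)` for any maximum sequence `γ`. -/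
lemma maxFlow_le_of_maxSeq {N : Network V} {y z x : V} (hyz : y ≠ z)
    {γ : List (List V)} (hγ : γ ∈ MaxSeqs N y z) :
    maxFlowValue N y z ≤ maxFlowValue (removeVerts N {x}) y z + lX {x} γ := by
  obtain ⟨hps, hlen⟩ := hγ
  set γ' := γ.filter fun p => !(decide (x ∈ p)) with hγ'
  have hmem : ∀ p ∈ γ', p ∈ γ ∧ x ∉ p := by
    intro p hp
    rw [hγ', List.mem_filter] at hp
    refine ⟨hp.1, ?_⟩
    have h2 := hp.2
    simp only [Bool.not_eq_true', decide_eq_false_iff_not] at h2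
    exact h2
  have hps' : IsPathSeq (removeVerts N {x}) y z γ' := by
    constructor
    · intro p hp
      obtain ⟨hpγ, hpx⟩ := hmem p hp
      obtain ⟨e1, e2, e3, e4, e5⟩ := hps.1 p hpγ
      refine ⟨e1, e2, e3, e4, chain'_congr_mem e5 fun a b hab hR => ?_⟩
      have ha : a ∈ p := (List.dropLast_sublist p).mem (mem_of_mem_pathArcs_fst hab)
      have hb : b ∈ p := (List.tail_sublist p).mem (mem_of_mem_pathArcs_snd hab)
      show 1 ≤ (if a ∈ ({x} : Finset V) ∨ b ∈ ({x} : Finset V) then 0 else N.c a b)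
      rw [if_neg]
      · exact hR
      · simp only [Finset.mem_singleton]
        push_neg
        exact ⟨fun h => hpx (h ▸ ha), fun h => hpx (h ▸ hb)⟩
    · intro u v
      by_cases hux : u ∈ ({x} : Finset V) ∨ v ∈ ({x} : Finset V)
      · have h0 : γ'.countP (fun p => decide ((u, v) ∈ pathArcs p)) = 0 := by
          rw [List.countP_eq_zero]
          intro p hp
          simp only [decide_eq_true_eq]
          intro harc
          rcases hux with h | h <;> rw [Finset.mem_singleton] at h
          · exact (hmem p hp).2 (h ▸ (List.dropLast_sublist p).mem
              (mem_of_mem_pathArcs_fst harc))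
          · exact (hmem p hp).2 (h ▸ (List.tail_sublist p).mem
              (mem_of_mem_pathArcs_snd harc))
        rw [h0]
        exact Nat.zero_le _
      · have hc' : (removeVerts N {x}).c u v = N.c u v := by
          show (if u ∈ ({x}:Finset V) ∨ v ∈ ({x}:Finset V) then 0 else N.c u v) = N.c u v
          rw [if_neg hux]
        rw [hc']
        exact ((List.filter_sublist (l := γ)).countP_le).trans (hps.2 u v)
  have h1 : γ'.length ≤ maxFlowValue (removeVerts N {x}) y z :=
    pathSeq_length_le hyz hps'
  have h2 : γ.length = γ'.length + lX {x} γ := by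
    rw [lX_singleton]
    have hsplit := List.length_eq_countP_add_countP (fun p => decide (x ∈ p)) (l := γ)
    have hcc : γ'.length
        = γ.countP (fun a => decide ¬ decide (x ∈ a) = true) := by
      rw [hγ', ← List.countP_eq_length_filter]
      exact List.countP_congr fun p _ => by simp
    omega
  rw [← maxSeqLen_eq N y z hyz, ← hlen]
  omega

end NetFlowAux

namespace NetFlowAux
set_option linter.unusedSectionVars false
open NetFlow

variable {V : Type*} [Fintype V] [DecidableEq V]

lemma length_filter_split (x : V) (γ : List (List V)) :
    γ.length = (γ.filter fun p => !(decide (x ∈ p))).length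
      + γ.countP (fun p => decide (x ∈ p)) := by
  have hsplit := List.length_eq_countP_add_countP (fun p => decide (x ∈ p)) (l := γ)
  have hcc : (γ.filter fun p => !(decide (x ∈ p))).length
      = γ.countP (fun a => decide ¬ decide (x ∈ a) = true) := by
    rw [← List.countP_eq_length_filter]
    exact List.countP_congr fun p _ => by simp
  omega

lemma vertexFlow_eq_outZ {f : V → V → ℕ} {y z x : V} (hxy : x ≠ y) (hxz : x ≠ z) :
    vertexFlow f y z x = outZ f x := by
  rw [vertexFlow, if_neg (by push_neg; exact ⟨hxy, hxz⟩)]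
  rfl

lemma outZ_cast (f : V → V → ℕ) (x : V) : outZ f x = ((∑ u, f x u : ℕ) : ℤ) := by
  rw [outZ]
  push_cast
  rfl

/-- `φ ≤ φ' + f(x)` for every maximum flow `f`. -/
lemma maxFlow_le_of_maxFlow {N : Network V} {y z x : V} (hyz : y ≠ z)
    (hxy : x ≠ y) (hxz : x ≠ z) {f : V → V → ℕ} (hf : IsMaxFlow N y z f) :
    (maxFlowValue N y z : ℤ) ≤ (maxFlowValue (removeVerts N {x}) y z : ℤ)
      + vertexFlow f y z x := by
  obtain ⟨hff, hfv⟩ := hf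
  obtain ⟨γ, w, d1, d2, d3, d4⟩ :=
    flow_decomp hyz (mass f) f le_rfl hff (by rw [hfv]; positivity)
  set γ' := γ.filter fun p => !(decide (x ∈ p)) with hγ'
  set w' := w.filter fun p => !(decide (x ∈ p)) with hw'
  have hmemγ : ∀ p ∈ γ', p ∈ γ ∧ x ∉ p := by
    intro p hp
    rw [hγ', List.mem_filter] at hp
    refine ⟨hp.1, ?_⟩
    have h2 := hp.2
    simp only [Bool.not_eq_true', decide_eq_false_iff_not] at h2
    exact h2
  have hmemw : ∀ p ∈ w', p ∈ w ∧ x ∉ p := by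
    intro p hp
    rw [hw', List.mem_filter] at hp
    refine ⟨hp.1, ?_⟩
    have h2 := hp.2
    simp only [Bool.not_eq_true', decide_eq_false_iff_not] at h2
    exact h2
  have hFle : ∀ u v, sumChi γ' u v + sumChi w' u v ≤ f u v := by
    intro u v
    have hd := d4 u v
    have e1 : sumChi γ' u v ≤ sumChi γ u v := hγ' ▸ sumChi_filter_le _ γ u v
    have e2 : sumChi w' u v ≤ sumChi w u v := hw' ▸ sumChi_filter_le _ w u v
    have e3 : f u v = sumChi γ u v + sumChi w u v := hd
    omega
  have hγpaths : ∀ p ∈ γ', IsPath N y z p := fun p hp => d1 p (hmemγ p hp).1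
  have hwcycles : ∀ p ∈ w', IsCycle N p := fun p hp => d2 p (hmemw p hp).1
  have hexzF : ∀ v, exz (fun u t => sumChi γ' u t + sumChi w' u t) v
      = (γ'.length : ℤ) * ((if v = y then 1 else 0) - (if v = z then 1 else 0)) := by
    intro v
    rw [exz_add, exz_sumChi_paths hγpaths v, exz_sumChi_cycles hwcycles v]
    ring
  have hFflow : IsFlow (removeVerts N {x}) y z
      (fun u v => sumChi γ' u v + sumChi w' u v) := by
    constructor
    · intro u v
      by_cases hux : u ∈ ({x} : Finset V) ∨ v ∈ ({x} : Finset V)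
      · show sumChi γ' u v + sumChi w' u v
          ≤ (if u ∈ ({x} : Finset V) ∨ v ∈ ({x} : Finset V) then 0 else N.c u v)
        rw [if_pos hux]
        rcases hux with h | h <;> rw [Finset.mem_singleton] at h
        · subst h
          rw [sumChi_zero_left (fun p hp => (hmemγ p hp).2) v,
            sumChi_zero_left (fun p hp => (hmemw p hp).2) v]
        · subst h
          rw [sumChi_zero_right (fun p hp => (hmemγ p hp).2) u,
            sumChi_zero_right (fun p hp => (hmemw p hp).2) u]
      · show sumChi γ' u v + sumChi w' u v
          ≤ (if u ∈ ({x} : Finset V) ∨ v ∈ ({x} : Finset V) then 0 else N.c u v)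
        rw [if_neg hux]
        exact (hFle u v).trans (hff.1 u v)
    · intro v hv hv'
      apply conservation_of_exz (f := fun u t => sumChi γ' u t + sumChi w' u t)
      rw [hexzF v, if_neg hv, if_neg hv']
      ring
  have hFval : flowValue (fun u v => sumChi γ' u v + sumChi w' u v) y
      = (γ'.length : ℤ) := by
    rw [flowValue_eq_exz, hexzF y, if_pos rfl, if_neg hyz]
    ring
  have h1 : γ'.length ≤ maxFlowValue (removeVerts N {x}) y z :=
    le_maxFlowValue hFflow hFval
  have hvf : vertexFlow f y z x = outZ f x := vertexFlow_eq_outZ hxy hxz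
  have h2 : (γ.countP fun p => decide (x ∈ p)) ≤ ∑ u, sumChi γ x u :=
    countP_mem_le_outsum hxz γ d1
  have h3 : (∑ u, sumChi γ x u) ≤ ∑ u, f x u :=
    Finset.sum_le_sum fun u _ => by
      have e3 : f x u = sumChi γ x u + sumChi w x u := d4 x u
      omega
  have houtc : outZ f x = ((∑ u, f x u : ℕ) : ℤ) := outZ_cast f x
  have h4 : γ.length = γ'.length + γ.countP (fun p => decide (x ∈ p)) :=
    hγ' ▸ length_filter_split x γ
  have h5 : (γ.length : ℤ) = (maxFlowValue N y z : ℤ) := d3.trans hfv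
  omega

/-- The good pair from the augmenting construction. -/
lemma exists_good_pair {N : Network V} {y z x : V} (hyz : y ≠ z)
    (hxy : x ≠ y) (hxz : x ≠ z) :
    ∃ (f : V → V → ℕ) (γ : List (List V)), IsMaxFlow N y z f ∧ γ ∈ MaxSeqs N y z ∧
      vertexFlow f y z x
        ≤ (maxFlowValue N y z : ℤ) - (maxFlowValue (removeVerts N {x}) y z : ℤ) ∧
      (lX {x} γ : ℤ)
        ≤ (maxFlowValue N y z : ℤ) - (maxFlowValue (removeVerts N {x}) y z : ℤ) := by
  obtain ⟨f, hf, hout⟩ := exists_good_maxflow N y z x hyz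
  obtain ⟨γ, w, d1, d2, d3, d4⟩ :=
    flow_decomp hyz (mass f) f le_rfl hf.1 (by rw [hf.2]; positivity)
  have hps : IsPathSeq N y z γ := pathSeq_of_decomp hf.1 ⟨d1, d2, d3, d4⟩
  have hlen : γ.length = maxSeqLen N y z := by
    rw [maxSeqLen_eq N y z hyz]
    exact_mod_cast d3.trans hf.2
  have hvf : vertexFlow f y z x = outZ f x := vertexFlow_eq_outZ hxy hxz
  have hbound : (lX {x} γ : ℤ) ≤ outZ f x := by
    rw [lX_singleton]
    have h2 := countP_mem_le_outsum hxz γ d1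
    have h3 : (∑ u, sumChi γ x u) ≤ ∑ u, f x u :=
      Finset.sum_le_sum fun u _ => by
        have e3 : f x u = sumChi γ x u + sumChi w x u := d4 x u
        omega
    have houtc : outZ f x = ((∑ u, f x u : ℕ) : ℤ) := outZ_cast f x
    omega
  exact ⟨f, γ, hf, ⟨hps, hlen⟩, hvf ▸ hout, hbound.trans (hvf ▸ hout)⟩

lemma inZ_zero_removeVerts {N : Network V} {X : Finset V} {y z : V} {f : V → V → ℕ}
    (hf : IsFlow (removeVerts N X) y z f) {x : V} (hx : x ∈ X) : inZ f x = 0 := by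
  rw [inZ]
  refine Finset.sum_eq_zero fun u _ => ?_
  have h := hf.1 u x
  have h2 : (removeVerts N X).c u x = 0 := by
    show (if u ∈ X ∨ x ∈ X then 0 else N.c u x) = 0
    rw [if_pos (Or.inr hx)]
  rw [h2] at h
  simp [Nat.le_zero.1 h]

lemma boundary_phi' {N : Network V} {y z x : V} (hyz : y ≠ z) (hx : x = y ∨ x = z) :
    maxFlowValue (removeVerts N {x}) y z = 0 := by
  obtain ⟨f, hfl, hv⟩ :=
    Nat.sSup_mem (flowSet_nonempty (removeVerts N {x}) y z)
      (flowSet_bddAbove (removeVerts N {x}) y z)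
  have hzero : flowValue f y = 0 := by
    rcases hx with rfl | rfl
    · rw [flowValue_eq_exz, exz,
        outZ_zero_removeVerts hfl (Finset.mem_singleton_self x),
        inZ_zero_removeVerts hfl (Finset.mem_singleton_self x)]
      ring
    · have h1 : exz f x = 0 := by
        rw [exz, outZ_zero_removeVerts hfl (Finset.mem_singleton_self x),
          inZ_zero_removeVerts hfl (Finset.mem_singleton_self x)]
        ring
      have h2 := exz_z_eq hfl hyz
      omega
  rw [hzero] at hv
  exact_mod_cast hv.symm

end NetFlowAux

namespace NetFlowAux
set_option linter.unusedSectionVars false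
open NetFlow

variable {V : Type*} [Fintype V] [DecidableEq V]

lemma master (N : Network V) (x y z : V) (hyz : y ≠ z) :
    (lambdaX N y z {x} : ℤ) = phiDrop N y z {x} ∧
      phiDrop N y z {x} = (deltaX N y z {x} : ℤ) := by
  classical
  have hLdef : lambdaX N y z {x}
      = sInf {n : ℕ | ∃ γ ∈ MaxSeqs N y z, lX {x} γ = n} := rfl
  have hDdef : deltaX N y z {x}
      = sInf {n : ℕ | ∃ f, IsMaxFlow N y z f ∧
          (∑ v ∈ ({x} : Finset V), vertexFlow f y z v) = (n : ℤ)} := rfl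
  by_cases hx : x = y ∨ x = z
  · -- boundary case
    have hphi' := boundary_phi' (N := N) hyz hx
    obtain ⟨γe, hγe⟩ := exists_maxSeq N y z hyz
    obtain ⟨γ0, hγ0, hlX0⟩ :=
      Nat.sInf_mem (⟨_, γe, hγe, rfl⟩ :
        {n : ℕ | ∃ γ ∈ MaxSeqs N y z, lX {x} γ = n}.Nonempty)
    have hall : lX {x} γ0 = γ0.length := by
      apply List.countP_eq_length.2
      intro p hp
      rw [any_mem_singleton, decide_eq_true_eq]
      rcases hx with rfl | rfl
      · exact List.mem_of_mem_head? (by rw [(hγ0.1.1 p hp).2.2.1]; rfl)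
      · exact mem_of_getLast? (hγ0.1.1 p hp).2.2.2.1
    have hL : lambdaX N y z {x} = maxFlowValue N y z := by
      rw [hLdef, ← hlX0, hall, hγ0.2, maxSeqLen_eq N y z hyz]
    obtain ⟨fm, hfm1, hfm2⟩ := exists_isMaxFlow N y z
    obtain ⟨f0, hf0, hsum0⟩ :=
      Nat.sInf_mem (⟨maxFlowValue N y z, fm, ⟨hfm1, hfm2⟩, by
          rw [Finset.sum_singleton, vertexFlow, if_pos hx, hfm2]⟩ :
        {n : ℕ | ∃ f, IsMaxFlow N y z f ∧
          (∑ v ∈ ({x} : Finset V), vertexFlow f y z v) = (n : ℤ)}.Nonempty)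
    have hDval : (deltaX N y z {x} : ℤ) = (maxFlowValue N y z : ℤ) := by
      rw [hDdef, ← hsum0, Finset.sum_singleton, vertexFlow, if_pos hx, hf0.2]
    constructor
    · rw [phiDrop, hphi', hL]
      push_cast
      ring
    · rw [phiDrop, hphi', hDval]
      push_cast
      ring
  · push_neg at hx
    obtain ⟨hxy, hxz⟩ := hx
    obtain ⟨f1, γ1, hmf1, hms1, hvb1, hlb1⟩ := exists_good_pair (N := N) hyz hxy hxz
    -- lambda bounds
    obtain ⟨γ0, hγ0, hlX0⟩ :=
      Nat.sInf_mem (⟨_, γ1, hms1, rfl⟩ :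
        {n : ℕ | ∃ γ ∈ MaxSeqs N y z, lX {x} γ = n}.Nonempty)
    have hLlow := maxFlow_le_of_maxSeq (x := x) hyz hγ0
    have hLup : lambdaX N y z {x} ≤ lX {x} γ1 := by
      rw [hLdef]
      exact Nat.sInf_le ⟨γ1, hms1, rfl⟩
    -- delta bounds
    have hnn : (0:ℤ) ≤ vertexFlow f1 y z x := by
      rw [vertexFlow_eq_outZ hxy hxz, outZ_cast]
      positivity
    have hmemδ : (vertexFlow f1 y z x).toNat ∈
        {n : ℕ | ∃ f, IsMaxFlow N y z f ∧
          (∑ v ∈ ({x} : Finset V), vertexFlow f y z v) = (n : ℤ)} :=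
      ⟨f1, hmf1, by rw [Finset.sum_singleton, Int.toNat_of_nonneg hnn]⟩
    obtain ⟨f0, hf0, hsum0⟩ := Nat.sInf_mem ⟨_, hmemδ⟩
    have hDlow := maxFlow_le_of_maxFlow hyz hxy hxz hf0
    have hDup : deltaX N y z {x} ≤ (vertexFlow f1 y z x).toNat := by
      rw [hDdef]
      exact Nat.sInf_le hmemδ
    have hsum0' : vertexFlow f0 y z x = (deltaX N y z {x} : ℤ) := by
      rw [hDdef, ← hsum0, Finset.sum_singleton]
    have hL0 : lX {x} γ0 = lambdaX N y z {x} := by rw [hLdef, hlX0]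
    have hDupz : (deltaX N y z {x} : ℤ) ≤ vertexFlow f1 y z x := by
      have := hDup
      omega
    have hLlowz : (maxFlowValue N y z : ℤ)
        ≤ (maxFlowValue (removeVerts N {x}) y z : ℤ) + (lambdaX N y z {x} : ℤ) := by
      rw [← hL0]
      exact_mod_cast hLlow
    have hLupz : (lambdaX N y z {x} : ℤ) ≤ (lX {x} γ1 : ℤ) := by exact_mod_cast hLup
    rw [phiDrop]
    constructor
    · omega
    · omega

end NetFlowAux

/-- `λ^N_{yz}(x) = φ^N_{yz}(x) = δ^N_{yz}(x)`. -/
theorem lambda_eq_phiDrop_eq_delta {V : Type*} [Fintype V] [DecidableEq V]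
    (hV : 2 ≤ Fintype.card V) (N : Network V) (x y z : V) (hyz : y ≠ z) :
    (NetFlow.lambdaX N y z {x} : ℤ) = NetFlow.phiDrop N y z {x} ∧
      NetFlow.phiDrop N y z {x} = (NetFlow.deltaX N y z {x} : ℤ) := by
  exact NetFlowAux.master N x y z hyz
end

section
/- Let N = (V, A, c) be a network, y, z ∈ V distinct and X ⊆ V. Then 0 ≤ φ^N_{yz}(X) ≤ λ^N_{yz}(X) ≤ min{δ^N_{yz}(X), φ^N_{yz}}. -/
namespace NetFlow

variable {V : Type*} [Fintype V] [DecidableEq V]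

open List

set_option linter.unusedSectionVars false

lemma pathArcs_nil : pathArcs ([] : List V) = [] := rfl
lemma pathArcs_single (a : V) : pathArcs [a] = [] := rfl
lemma pathArcs_cons₂ (a b : V) (t : List V) :
    pathArcs (a :: b :: t) = (a, b) :: pathArcs (b :: t) := rfl

lemma map_fst_pathArcs (p : List V) : (pathArcs p).map Prod.fst = p.dropLast := by
  induction p with
  | nil => rfl
  | cons a t ih =>
    cases t with
    | nil => rfl
    | cons b t' =>
      rw [pathArcs_cons₂, List.map_cons, ih]
      rfl

lemma map_snd_pathArcs (p : List V) : (pathArcs p).map Prod.snd = p.tail := by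
  unfold pathArcs
  exact List.map_snd_zip (by cases p <;> simp)

lemma mem_fst_of_mem_pathArcs {p : List V} {a : V × V} (h : a ∈ pathArcs p) : a.1 ∈ p :=
  (p.dropLast_sublist).mem (map_fst_pathArcs p ▸ List.mem_map_of_mem (f := Prod.fst) h)

lemma mem_snd_of_mem_pathArcs {p : List V} {a : V × V} (h : a ∈ pathArcs p) : a.2 ∈ p :=
  (p.tail_sublist).mem (map_snd_pathArcs p ▸ List.mem_map_of_mem (f := Prod.snd) h)

lemma pathArcs_nodup {p : List V} (h : p.Nodup) : (pathArcs p).Nodup :=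
  List.Nodup.of_map Prod.fst (map_fst_pathArcs p ▸ h.sublist p.dropLast_sublist)

lemma chain'_iff_pathArcs {R : V → V → Prop} {p : List V} :
    p.Chain' R ↔ ∀ a ∈ pathArcs p, R a.1 a.2 := by
  induction p with
  | nil => simp [pathArcs_nil, List.Chain']
  | cons a t ih =>
    cases t with
    | nil => simp [pathArcs_single, List.Chain']
    | cons b t' =>
      simp only [List.Chain'] at ih ⊢
      rw [List.isChain_cons_cons, pathArcs_cons₂, ih]
      constructor
      · rintro ⟨h1, h2⟩ x hx
        rcases List.mem_cons.1 hx with h | h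
        · subst h; exact h1
        · exact h2 x h
      · intro h
        exact ⟨h (a, b) List.mem_cons_self, fun x hx => h x (List.mem_cons_of_mem _ hx)⟩

/-- Sum over all second coordinates of counts of pairs with fixed first coordinate. -/
lemma sum_count_fst (l : List (V × V)) (x : V) :
    ∑ u : V, l.count (x, u) = (l.map Prod.fst).count x := by
  induction l with
  | nil => simp
  | cons a l ih =>
    obtain ⟨a1, a2⟩ := a
    have hcount : ∀ u : V, List.count (x, u) ((a1,a2) :: l)
        = List.count (x,u) l + if x = a1 ∧ u = a2 then 1 else 0 := by
      intro u; rw [List.count_cons]; congr 1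
      simp only [beq_iff_eq, Prod.mk.injEq]
      exact if_congr (by constructor <;> exact fun h => ⟨h.1.symm, h.2.symm⟩) rfl rfl
    simp only [hcount, Finset.sum_add_distrib, ih, List.map_cons, List.count_cons]
    congr 1
    by_cases h : x = a1
    · subst h; simp
    · simp [h, Ne.symm h]

lemma sum_count_snd (l : List (V × V)) (x : V) :
    ∑ u : V, l.count (u, x) = (l.map Prod.snd).count x := by
  induction l with
  | nil => simp
  | cons a l ih =>
    obtain ⟨a1, a2⟩ := a
    have hcount : ∀ u : V, List.count (u, x) ((a1,a2) :: l)
        = List.count (u,x) l + if x = a2 ∧ u = a1 then 1 else 0 := by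
      intro u; rw [List.count_cons]; congr 1
      simp only [beq_iff_eq, Prod.mk.injEq]
      exact if_congr (by constructor <;> exact fun h => ⟨h.2.symm, h.1.symm⟩) rfl rfl
    simp only [hcount, Finset.sum_add_distrib, ih, List.map_cons, List.count_cons]
    congr 1
    by_cases h : x = a2
    · subst h; simp
    · simp [h, Ne.symm h]

lemma sum_chi_out (p : List V) (x : V) :
    ∑ u : V, chi p x u = p.dropLast.count x := by
  have : ∀ u, chi p x u = (pathArcs p).count (x, u) := fun u => rfl
  simp only [this, sum_count_fst, map_fst_pathArcs]

lemma sum_chi_in (p : List V) (x : V) :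
    ∑ u : V, chi p u x = p.tail.count x := by
  have : ∀ u, chi p u x = (pathArcs p).count (u, x) := fun u => rfl
  simp only [this, sum_count_snd, map_snd_pathArcs]

/-- For a simple path from `y` to `z`: counts in `dropLast`. -/
lemma count_dropLast_of_path {p : List V} {y z : V} (hlen : 2 ≤ p.length)
    (hnd : p.Nodup) (hh : p.head? = some y) (hl : p.getLast? = some z) (x : V) :
    p.dropLast.count x = if x ∈ p ∧ x ≠ z then 1 else 0 := by
  have hne : p ≠ [] := by rintro rfl; simp at hh
  have hdecomp : p.dropLast ++ [p.getLast hne] = p := List.dropLast_append_getLast hne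
  have hz : p.getLast hne = z := by
    rw [List.getLast?_eq_getLast hne] at hl; exact Option.some_injective _ hl
  have hnd' : (p.dropLast ++ [z]).Nodup := by rw [← hz, hdecomp]; exact hnd
  have hzq : z ∉ p.dropLast := by
    intro hmem
    exact (List.disjoint_of_nodup_append hnd') hmem (List.mem_singleton_self z)
  have hq : p.dropLast.Nodup := hnd.sublist p.dropLast_sublist
  by_cases hxz : x = z
  · subst hxz
    simp [List.count_eq_zero.2 hzq, hzq]
  · by_cases hxp : x ∈ p
    · have : x ∈ p.dropLast ++ [z] := by rw [← hz, hdecomp]; exact hxp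
      rcases List.mem_append.1 this with h | h
      · rw [List.count_eq_one_of_mem hq h]; simp [hxp, hxz]
      · exact absurd (List.mem_singleton.1 h) hxz
    · have : x ∉ p.dropLast := fun h => hxp (p.dropLast_sublist.mem h)
      rw [List.count_eq_zero.2 this]; simp [hxp]

lemma count_tail_of_path {p : List V} {y z : V} (hlen : 2 ≤ p.length)
    (hnd : p.Nodup) (hh : p.head? = some y) (hl : p.getLast? = some z) (x : V) :
    p.tail.count x = if x ∈ p ∧ x ≠ y then 1 else 0 := by
  obtain ⟨t, rfl⟩ : ∃ t, p = y :: t := by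
    cases p with
    | nil => simp at hh
    | cons a t =>
      simp only [List.head?_cons, Option.some.injEq] at hh
      exact ⟨t, by rw [hh]⟩
  have hyt : y ∉ t := (List.nodup_cons.1 hnd).1
  have hnt : t.Nodup := (List.nodup_cons.1 hnd).2
  by_cases hxy : x = y
  · subst hxy; simp [List.count_eq_zero.2 hyt]
  · by_cases hxt : x ∈ t
    · rw [List.tail_cons, List.count_eq_one_of_mem hnt hxt]
      simp [List.mem_cons, hxt, hxy]
    · have hxp : x ∉ y :: t := by simp [hxy, hxt]
      rw [List.tail_cons, List.count_eq_zero.2 hxt]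
      simp [hxp]

lemma count_nodup_ite {α : Type*} [BEq α] [LawfulBEq α] {l : List α} (h : l.Nodup) (a : α) :
    l.count a = if a ∈ l then 1 else 0 := by
  induction l with
  | nil => simp
  | cons b l ih =>
    rw [List.count_cons, ih (List.nodup_cons.1 h).2]
    by_cases hab : a = b
    · subst hab
      simp [(List.nodup_cons.1 h).1]
    · simp [hab, Ne.symm hab]

lemma chi_eq_ite {p : List V} (h : p.Nodup) (u v : V) :
    chi p u v = if (u, v) ∈ pathArcs p then 1 else 0 :=
  count_nodup_ite (pathArcs_nodup h) (u, v)

lemma seqFlow_eq_sum {γ : List (List V)} (h : ∀ p ∈ γ, p.Nodup) (u v : V) :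
    seqFlow γ u v = (γ.map (fun p => chi p u v)).sum := by
  induction γ with
  | nil => rfl
  | cons p γ ih =>
    unfold seqFlow at *
    rw [List.countP_cons, List.map_cons, List.sum_cons,
      ih (fun q hq => h q (List.mem_cons_of_mem _ hq)),
      chi_eq_ite (h p List.mem_cons_self)]
    simp [Nat.add_comm]

lemma sum_list_sum {α : Type*} (γ : List α) (h : α → V → ℕ) :
    ∑ u : V, (γ.map (fun p => h p u)).sum = (γ.map (fun p => ∑ u : V, h p u)).sum := by
  induction γ with
  | nil => simp
  | cons p γ ih => simp [Finset.sum_add_distrib, ih]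

lemma sum_chi_out_eq {p : List V} {y z : V} (hp : 2 ≤ p.length) (hnd : p.Nodup)
    (hh : p.head? = some y) (hl : p.getLast? = some z) (x : V) :
    ∑ u : V, chi p x u = if x ∈ p ∧ x ≠ z then 1 else 0 := by
  rw [sum_chi_out, count_dropLast_of_path hp hnd hh hl]

lemma sum_chi_in_eq {p : List V} {y z : V} (hp : 2 ≤ p.length) (hnd : p.Nodup)
    (hh : p.head? = some y) (hl : p.getLast? = some z) (x : V) :
    ∑ u : V, chi p u x = if x ∈ p ∧ x ≠ y then 1 else 0 := by
  rw [sum_chi_in, count_tail_of_path hp hnd hh hl]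

lemma IsPath.mem_head {N : Network V} {y z : V} {p : List V} (hp : IsPath N y z p) : y ∈ p :=
  List.mem_of_mem_head? (by rw [hp.2.2.1]; rfl)

lemma IsPath.mem_last {N : Network V} {y z : V} {p : List V} (hp : IsPath N y z p) : z ∈ p := by
  have := hp.2.2.2.1
  exact List.mem_of_mem_getLast? (by rw [this]; rfl)

lemma IsPath.ne_nil {N : Network V} {y z : V} {p : List V} (hp : IsPath N y z p) : p ≠ [] := by
  rintro rfl; simp [IsPath] at hp

/-- `seqFlow γ` is a flow of value `γ.length`. -/
lemma seqFlow_isFlow {N : Network V} {y z : V} (hyz : y ≠ z) {γ : List (List V)}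
    (h : IsPathSeq N y z γ) :
    IsFlow N y z (seqFlow γ) ∧ flowValue (seqFlow γ) y = (γ.length : ℤ) := by
  have hnd : ∀ p ∈ γ, p.Nodup := fun p hp => (h.1 p hp).2.1
  have hout : ∀ x, ∑ u : V, seqFlow γ x u
      = (γ.map (fun p => if x ∈ p ∧ x ≠ z then 1 else 0)).sum := by
    intro x
    calc ∑ u : V, seqFlow γ x u = ∑ u : V, (γ.map (fun p => chi p x u)).sum := by
          exact Finset.sum_congr rfl fun u _ => seqFlow_eq_sum hnd x u
      _ = (γ.map (fun p => ∑ u : V, chi p x u)).sum := sum_list_sum γ _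
      _ = _ := by
          apply congrArg
          apply List.map_congr_left
          intro p hp
          obtain ⟨h1, h2, h3, h4, _⟩ := h.1 p hp
          exact sum_chi_out_eq h1 h2 h3 h4 x
  have hin : ∀ x, ∑ u : V, seqFlow γ u x
      = (γ.map (fun p => if x ∈ p ∧ x ≠ y then 1 else 0)).sum := by
    intro x
    calc ∑ u : V, seqFlow γ u x = ∑ u : V, (γ.map (fun p => chi p u x)).sum := by
          exact Finset.sum_congr rfl fun u _ => seqFlow_eq_sum hnd u x
      _ = (γ.map (fun p => ∑ u : V, chi p u x)).sum := sum_list_sum γ _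
      _ = _ := by
          apply congrArg
          apply List.map_congr_left
          intro p hp
          obtain ⟨h1, h2, h3, h4, _⟩ := h.1 p hp
          exact sum_chi_in_eq h1 h2 h3 h4 x
  have houty : ∑ u : V, seqFlow γ y u = γ.length := by
    rw [hout y]
    have : ∀ p ∈ γ, (if y ∈ p ∧ y ≠ z then 1 else 0) = 1 := by
      intro p hp
      simp [(h.1 p hp).mem_head, hyz]
    rw [List.map_congr_left this]
    simp
  have hiny : ∑ u : V, seqFlow γ u y = 0 := by
    rw [hin y]
    have : ∀ p ∈ γ, (if y ∈ p ∧ y ≠ y then 1 else 0) = 0 := by intro p hp; simp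
    rw [List.map_congr_left this]
    simp
  refine ⟨⟨h.2, ?_⟩, ?_⟩
  · intro x hxy hxz
    rw [hout x, hin x]
    apply congrArg
    apply List.map_congr_left
    intro p hp
    simp [hxy, hxz]
  · unfold flowValue
    rw [← Nat.cast_sum, ← Nat.cast_sum, houty, hiny]
    simp

lemma flowValue_le_cap {N : Network V} {y z : V} {f : V → V → ℕ} (hf : IsFlow N y z f) :
    flowValue f y ≤ (∑ u : V, N.c y u : ℤ) := by
  unfold flowValue
  have h1 : (∑ u : V, (f y u : ℤ)) ≤ ∑ u : V, (N.c y u : ℤ) :=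
    Finset.sum_le_sum fun u _ => by exact_mod_cast hf.1 y u
  have h2 : (0 : ℤ) ≤ ∑ u : V, (f u y : ℤ) :=
    Finset.sum_nonneg fun u _ => by positivity
  omega

lemma zero_isFlow (N : Network V) (y z : V) : IsFlow N y z (fun _ _ => 0) :=
  ⟨fun _ _ => Nat.zero_le _, fun _ _ _ => rfl⟩

lemma flowSet_nonempty (N : Network V) (y z : V) :
    {m : ℕ | ∃ f, IsFlow N y z f ∧ flowValue f y = (m : ℤ)}.Nonempty :=
  ⟨0, fun _ _ => 0, zero_isFlow N y z, by simp [flowValue]⟩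

lemma flowSet_bddAbove (N : Network V) (y z : V) :
    BddAbove {m : ℕ | ∃ f, IsFlow N y z f ∧ flowValue f y = (m : ℤ)} := by
  refine ⟨∑ u : V, N.c y u, fun m hm => ?_⟩
  obtain ⟨f, hf, hv⟩ := hm
  have := flowValue_le_cap hf
  rw [hv] at this
  exact_mod_cast this

lemma le_maxFlowValue {N : Network V} {y z : V} {f : V → V → ℕ} {m : ℕ}
    (hf : IsFlow N y z f) (hv : flowValue f y = (m : ℤ)) : m ≤ maxFlowValue N y z :=
  le_csSup (flowSet_bddAbove N y z) ⟨f, hf, hv⟩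

lemma exists_isMaxFlow (N : Network V) (y z : V) : ∃ f, IsMaxFlow N y z f :=
  Nat.sSup_mem (flowSet_nonempty N y z) (flowSet_bddAbove N y z)

/-- From a flow of positive value one can extract a path along positive arcs. -/
lemma exists_flow_path {N : Network V} {y z : V} {f : V → V → ℕ}
    (hf : IsFlow N y z f) (hyz : y ≠ z) (hv : 1 ≤ flowValue f y) :
    ∃ p, IsPath N y z p ∧ ∀ a ∈ pathArcs p, 1 ≤ f a.1 a.2 := by
  classical
  set reach : V → Prop := fun v => ∃ p : List V, p ≠ [] ∧ p.Nodup ∧ p.head? = some y ∧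
    p.getLast? = some v ∧ p.Chain' (fun u w => 1 ≤ f u w) with hreach
  have hy : reach y := ⟨[y], by simp, by simp, rfl, rfl, by simp [List.Chain']⟩
  have hclosed : ∀ u v, reach u → 1 ≤ f u v → reach v := by
    intro u v hu huv
    obtain ⟨p, hne, hnd, hh, hl, hch⟩ := hu
    by_cases hvp : v ∈ p
    · obtain ⟨s, t, rfl⟩ := List.append_of_mem hvp
      have hst : (s ++ [v]) ++ t = s ++ v :: t := by simp
      refine ⟨s ++ [v], by simp, ?_, ?_, List.getLast?_concat, ?_⟩
      · exact hnd.sublist (hst ▸ List.sublist_append_left _ _)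
      · cases s with
        | nil => simpa using hh
        | cons a s' => simpa using hh
      · have := hst ▸ hch
        exact (List.isChain_append.1 this).1
    · refine ⟨p ++ [v], by simp, ?_, ?_, List.getLast?_concat, ?_⟩
      · simp [List.nodup_append, hnd, hvp]
        exact fun a ha h => hvp (h ▸ ha)
      · cases p with
        | nil => exact absurd rfl hne
        | cons a s' => simpa using hh
      · simp only [List.Chain']
        rw [List.isChain_append]
        refine ⟨hch, by simp, ?_⟩
        intro a ha b hb
        simp only [List.head?_cons, Option.mem_def, Option.some.injEq] at hb
        rw [hl] at ha
        simp only [Option.mem_def, Option.some.injEq] at ha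
        subst ha; subst hb
        exact huv
  have hz : reach z := by
    by_contra hzr
    set R : Finset V := Finset.univ.filter (fun v => reach v) with hR
    have hyR : y ∈ R := by simp [hR, hy]
    have hzR : z ∉ R := by simp [hR]; exact hzr
    have hcut : ∀ u ∈ R, ∀ v, v ∉ R → f u v = 0 := by
      intro u hu v hv
      by_contra hne0
      refine hv ?_
      simp only [hR, Finset.mem_filter, Finset.mem_univ, true_and] at hu ⊢
      exact hclosed u v hu (Nat.one_le_iff_ne_zero.2 hne0)
    have hterm : ∀ x ∈ R, x ≠ y → ((∑ u, (f x u : ℤ)) - ∑ u, (f u x : ℤ)) = 0 := by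
      intro x hx hxy
      have hxz : x ≠ z := fun h => hzR (h ▸ hx)
      have hcons := hf.2 x hxy hxz
      have : (∑ u, (f u x : ℤ)) = ∑ u, (f x u : ℤ) := by exact_mod_cast hcons
      omega
    have hsum : ∑ x ∈ R, ((∑ u, (f x u : ℤ)) - ∑ u, (f u x : ℤ)) = flowValue f y := by
      rw [Finset.sum_eq_single_of_mem y hyR (fun x hx hxy => hterm x hx hxy)]
      rfl
    have hsplit : ∀ g : V → V → ℕ, ∑ x ∈ R, ∑ u, (g x u : ℤ)
        = ∑ x ∈ R, ∑ u ∈ R, (g x u : ℤ) + ∑ x ∈ R, ∑ u ∈ Rᶜ, (g x u : ℤ) := by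
      intro g
      rw [← Finset.sum_add_distrib]
      exact Finset.sum_congr rfl fun x _ => (Finset.sum_add_sum_compl R _).symm
    have hswap : ∑ x ∈ R, ∑ u ∈ R, (f x u : ℤ) = ∑ x ∈ R, ∑ u ∈ R, ((fun a b => f b a) x u : ℤ) :=
      Finset.sum_comm
    have hout0 : ∑ x ∈ R, ∑ u ∈ Rᶜ, (f x u : ℤ) = 0 := by
      refine Finset.sum_eq_zero fun x hx => Finset.sum_eq_zero fun u hu => ?_
      rw [hcut x hx u (Finset.mem_compl.1 hu)]; rfl
    have hin_nonneg : (0:ℤ) ≤ ∑ x ∈ R, ∑ u ∈ Rᶜ, ((fun a b => f b a) x u : ℤ) := by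
      refine Finset.sum_nonneg fun x _ => Finset.sum_nonneg fun u _ => by positivity
    have : flowValue f y ≤ 0 := by
      rw [← hsum, Finset.sum_sub_distrib, hsplit f, hsplit (fun a b => f b a), hswap, hout0]
      beta_reduce at hin_nonneg ⊢
      omega
    omega
  obtain ⟨p, hne, hnd, hh, hl, hch⟩ := hz
  have hlen : 2 ≤ p.length := by
    rcases p with _ | ⟨a, _ | ⟨b, t⟩⟩
    · exact absurd rfl hne
    · exfalso
      simp only [List.head?_cons, Option.some.injEq] at hh
      simp only [List.getLast?_singleton, Option.some.injEq] at hl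
      exact hyz (hh ▸ hl ▸ rfl)
    · simp
  refine ⟨p, ⟨hlen, hnd, hh, hl, ?_⟩, chain'_iff_pathArcs.1 hch⟩
  exact hch.imp fun {u w} h1 => le_trans h1 (hf.1 u w)

/-- Flow decomposition: a flow of value `n` contains `n` arc-disjoint paths. -/
lemma flow_decomp {N : Network V} {y z : V} (hyz : y ≠ z) :
    ∀ (n : ℕ) (f : V → V → ℕ), IsFlow N y z f → flowValue f y = (n : ℤ) →
    ∃ γ : List (List V), (∀ p ∈ γ, IsPath N y z p) ∧ γ.length = n ∧
      ∀ u v : V, (γ.countP (fun p => decide ((u, v) ∈ pathArcs p))) ≤ f u v := by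
  intro n
  induction n with
  | zero => exact fun f _ _ => ⟨[], by simp, rfl, by simp⟩
  | succ n ih =>
    intro f hf hv
    obtain ⟨p, hp, harc⟩ := exists_flow_path hf hyz
      (by rw [hv]; exact_mod_cast Nat.succ_le_succ (Nat.zero_le n))
    set g : V → V → ℕ := fun u v => f u v - chi p u v with hg
    have hchile : ∀ u v, chi p u v ≤ f u v := by
      intro u v
      rw [chi_eq_ite hp.2.1]
      split
      · exact harc (u, v) (by assumption)
      · exact Nat.zero_le _
    have hadd : ∀ u v, g u v + chi p u v = f u v := fun u v =>
      Nat.sub_add_cancel (hchile u v)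
    have hgflow : IsFlow N y z g := by
      constructor
      · exact fun u v => le_trans (Nat.sub_le _ _) (hf.1 u v)
      · intro x hxy hxz
        have h1 : ∑ u, g u x + ∑ u, chi p u x = ∑ u, f u x := by
          rw [← Finset.sum_add_distrib]
          exact Finset.sum_congr rfl fun u _ => hadd u x
        have h2 : ∑ u, g x u + ∑ u, chi p x u = ∑ u, f x u := by
          rw [← Finset.sum_add_distrib]
          exact Finset.sum_congr rfl fun u _ => hadd x u
        have hch : ∑ u, chi p u x = ∑ u, chi p x u := by
          rw [sum_chi_in_eq hp.1 hp.2.1 hp.2.2.1 hp.2.2.2.1,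
            sum_chi_out_eq hp.1 hp.2.1 hp.2.2.1 hp.2.2.2.1]
          simp [hxy, hxz]
        have hcons := hf.2 x hxy hxz
        omega
    have hsout : ∑ u, chi p y u = 1 := by
      rw [sum_chi_out_eq hp.1 hp.2.1 hp.2.2.1 hp.2.2.2.1]
      simp [hp.mem_head, hyz]
    have hsin : ∑ u, chi p u y = 0 := by
      rw [sum_chi_in_eq hp.1 hp.2.1 hp.2.2.1 hp.2.2.2.1]
      simp
    have e1 : ∑ u, g y u + 1 = ∑ u, f y u := by
      rw [← hsout, ← Finset.sum_add_distrib]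
      exact Finset.sum_congr rfl fun u _ => hadd y u
    have e2 : ∑ u, g u y = ∑ u, f u y := by
      have h1 : ∑ u, g u y + ∑ u, chi p u y = ∑ u, f u y := by
        rw [← Finset.sum_add_distrib]
        exact Finset.sum_congr rfl fun u _ => hadd u y
      rw [hsin] at h1
      simpa using h1
    have hvg : flowValue g y = (n : ℤ) := by
      unfold flowValue at hv ⊢
      rw [← Nat.cast_sum, ← Nat.cast_sum] at hv ⊢
      have c1 : ((∑ u, g y u : ℕ) : ℤ) + 1 = ((∑ u, f y u : ℕ) : ℤ) := by exact_mod_cast e1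
      have c2 : ((∑ u, g u y : ℕ) : ℤ) = ((∑ u, f u y : ℕ) : ℤ) := by exact_mod_cast e2
      omega
    obtain ⟨γ', hγ'path, hγ'len, hγ'cnt⟩ := ih g hgflow hvg
    refine ⟨p :: γ', ?_, by simp [hγ'len], ?_⟩
    · intro q hq
      rcases List.mem_cons.1 hq with h | h
      · exact h ▸ hp
      · exact hγ'path q h
    · intro u v
      rw [List.countP_cons]
      have hite : (if decide ((u,v) ∈ pathArcs p) = true then 1 else 0)
          ≤ chi p u v := by
        rw [chi_eq_ite hp.2.1]
        simp only [decide_eq_true_eq]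
        split <;> simp_all
      have := hγ'cnt u v
      have := hadd u v
      omega

lemma empty_isPathSeq (N : Network V) (y z : V) : IsPathSeq N y z [] :=
  ⟨fun p hp => absurd hp List.not_mem_nil, fun u v => by simp⟩

lemma seqSet_bddAbove (N : Network V) (y z : V) (hyz : y ≠ z) :
    BddAbove {m : ℕ | ∃ γ : List (List V), IsPathSeq N y z γ ∧ γ.length = m} := by
  refine ⟨∑ u : V, N.c y u, fun m hm => ?_⟩
  obtain ⟨γ, hγ, hlen⟩ := hm
  obtain ⟨hflow, hval⟩ := seqFlow_isFlow hyz hγ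
  have := flowValue_le_cap hflow
  rw [hval, hlen] at this
  exact_mod_cast this

lemma le_maxSeqLen {N : Network V} {y z : V} (hyz : y ≠ z) {γ : List (List V)}
    (hγ : IsPathSeq N y z γ) : γ.length ≤ maxSeqLen N y z :=
  le_csSup (seqSet_bddAbove N y z hyz) ⟨γ, hγ, rfl⟩

lemma maxSeqLen_eq_maxFlowValue (N : Network V) {y z : V} (hyz : y ≠ z) :
    maxSeqLen N y z = maxFlowValue N y z := by
  apply Nat.le_antisymm
  · refine csSup_le ⟨0, ⟨[], empty_isPathSeq N y z, rfl⟩⟩ ?_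
    rintro m ⟨γ, hγ, rfl⟩
    obtain ⟨hflow, hval⟩ := seqFlow_isFlow hyz hγ
    exact le_maxFlowValue hflow hval
  · obtain ⟨f, hf, hval⟩ := exists_isMaxFlow N y z
    obtain ⟨γ, hpaths, hlen, hcnt⟩ := flow_decomp hyz (maxFlowValue N y z) f hf hval
    exact hlen ▸ le_maxSeqLen hyz ⟨hpaths, fun u v => (hcnt u v).trans (hf.1 u v)⟩

lemma exists_maxSeq (N : Network V) (y z : V) (hyz : y ≠ z) :
    ∃ γ, γ ∈ MaxSeqs N y z := by
  have := Nat.sSup_mem (s := {m : ℕ | ∃ γ : List (List V), IsPathSeq N y z γ ∧ γ.length = m})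
    ⟨0, [], empty_isPathSeq N y z, rfl⟩ (seqSet_bddAbove N y z hyz)
  obtain ⟨γ, hγ, hlen⟩ := this
  exact ⟨γ, hγ, hlen⟩

lemma maxFlowValue_le_of_cap_le {N N' : Network V} (h : ∀ u v, N'.c u v ≤ N.c u v) (y z : V) :
    maxFlowValue N' y z ≤ maxFlowValue N y z := by
  apply csSup_le (flowSet_nonempty N' y z)
  rintro m ⟨f, hf, hv⟩
  exact le_maxFlowValue ⟨fun u v => le_trans (hf.1 u v) (h u v), hf.2⟩ hv

lemma chain'_removeVerts {N : Network V} {X : Finset V} {p : List V}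
    (h : ∀ x ∈ p, x ∉ X) (hc : p.Chain' fun u v => 1 ≤ N.c u v) :
    p.Chain' fun u v => 1 ≤ (removeVerts N X).c u v := by
  rw [chain'_iff_pathArcs] at hc ⊢
  intro a ha
  have h1 := h a.1 (mem_fst_of_mem_pathArcs ha)
  have h2 := h a.2 (mem_snd_of_mem_pathArcs ha)
  simpa [removeVerts, h1, h2] using hc a ha

lemma countP_le_sum_countP {α β : Type*} [DecidableEq β] (l : List α) (P : α → Bool)
    (s : Finset β) (Q : β → α → Bool)
    (h : ∀ a ∈ l, P a = true → ∃ x ∈ s, Q x a = true) :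
    l.countP P ≤ ∑ x ∈ s, l.countP (Q x) := by
  induction l with
  | nil => simp
  | cons a l ih =>
    rw [List.countP_cons]
    have ih' := ih fun b hb hPb => h b (List.mem_cons_of_mem _ hb) hPb
    have hs : ∑ x ∈ s, List.countP (Q x) (a :: l)
        = ∑ x ∈ s, List.countP (Q x) l + ∑ x ∈ s, (if Q x a then 1 else 0) := by
      rw [← Finset.sum_add_distrib]
      exact Finset.sum_congr rfl fun x _ => List.countP_cons
    rw [hs]
    by_cases hPa : P a = true
    · obtain ⟨x, hx, hQ⟩ := h a List.mem_cons_self hPa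
      have h1 : 1 ≤ ∑ x ∈ s, (if Q x a then 1 else 0) := by
        have := Finset.single_le_sum (f := fun x => if Q x a then 1 else 0)
          (fun i _ => by positivity) hx
        simpa [hQ] using this
      simp only [hPa, if_true]
      omega
    · simp only [Bool.not_eq_true] at hPa
      simp [hPa]
      omega

lemma countP_not_add {α : Type*} (P : α → Bool) (l : List α) :
    l.countP P + l.countP (fun a => !P a) = l.length := by
  induction l with
  | nil => rfl
  | cons a l ih =>
    rw [List.countP_cons, List.countP_cons]
    cases h : P a <;> simp [h] <;> omega

lemma main_aux (N : Network V) (y z : V) (hyz : y ≠ z) (X : Finset V) :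
    0 ≤ phiDrop N y z X ∧ phiDrop N y z X ≤ (lambdaX N y z X : ℤ) ∧
      lambdaX N y z X ≤ min (deltaX N y z X) (maxFlowValue N y z) := by
  classical
  have hML : maxSeqLen N y z = maxFlowValue N y z := maxSeqLen_eq_maxFlowValue N hyz
  -- a maximum sequence minimizing lX
  have hlamne : {n : ℕ | ∃ γ ∈ MaxSeqs N y z, lX X γ = n}.Nonempty := by
    obtain ⟨γ₀, hγ₀⟩ := exists_maxSeq N y z hyz
    exact ⟨lX X γ₀, γ₀, hγ₀, rfl⟩
  obtain ⟨γ₁, hγ₁mem, hγ₁lX⟩ := Nat.sInf_mem hlamne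
  have hlam : lambdaX N y z X = lX X γ₁ := hγ₁lX.symm
  obtain ⟨hγ₁seq, hγ₁len⟩ := hγ₁mem
  have hγ₁lenφ : γ₁.length = maxFlowValue N y z := by rw [hγ₁len, hML]
  -- Part A : φ_X ≤ φ
  have hXle : maxFlowValue (removeVerts N X) y z ≤ maxFlowValue N y z := by
    apply maxFlowValue_le_of_cap_le
    intro u v
    show (if u ∈ X ∨ v ∈ X then 0 else N.c u v) ≤ N.c u v
    split
    · exact Nat.zero_le _
    · exact le_rfl
  have partA : 0 ≤ phiDrop N y z X := by
    unfold phiDrop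
    omega
  -- Part B : φ ≤ λ + φ_X
  set γ' := γ₁.filter (fun p => !(p.any fun x => decide (x ∈ X))) with hγ'def
  have hγ'seq : IsPathSeq (removeVerts N X) y z γ' := by
    constructor
    · intro p hp
      obtain ⟨hpγ, hpb⟩ := List.mem_filter.1 hp
      have hpath := hγ₁seq.1 p hpγ
      have hnx : ∀ x ∈ p, x ∉ X := by
        intro x hx hxX
        simp only [Bool.not_eq_true', List.any_eq_false, decide_eq_true_eq] at hpb
        exact hpb x hx hxX
      exact ⟨hpath.1, hpath.2.1, hpath.2.2.1, hpath.2.2.2.1,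
        chain'_removeVerts hnx hpath.2.2.2.2⟩
    · intro u v
      by_cases hX : u ∈ X ∨ v ∈ X
      · have hcap : (removeVerts N X).c u v = 0 := by
          show (if u ∈ X ∨ v ∈ X then 0 else N.c u v) = 0
          simp [hX]
        rw [hcap, Nat.le_zero, List.countP_eq_zero]
        intro p hp
        obtain ⟨hpγ, hpb⟩ := List.mem_filter.1 hp
        simp only [Bool.not_eq_true', List.any_eq_false, decide_eq_true_eq] at hpb
        simp only [decide_eq_true_eq]
        intro hmem
        rcases hX with h | h
        · exact hpb u (mem_fst_of_mem_pathArcs hmem) h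
        · exact hpb v (mem_snd_of_mem_pathArcs hmem) h
      · have hcap : (removeVerts N X).c u v = N.c u v := by
          show (if u ∈ X ∨ v ∈ X then 0 else N.c u v) = N.c u v
          simp [hX]
        rw [hcap]
        exact le_trans (List.Sublist.countP_le List.filter_sublist) (hγ₁seq.2 u v)
  have hγ'le : γ'.length ≤ maxFlowValue (removeVerts N X) y z := by
    rw [← maxSeqLen_eq_maxFlowValue (removeVerts N X) hyz]
    exact le_maxSeqLen hyz hγ'seq
  have hγ'len : γ'.length
      = γ₁.countP (fun p => !(p.any fun x => decide (x ∈ X))) := by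
    rw [hγ'def]
    exact List.countP_eq_length_filter.symm
  have hsplitlen : lX X γ₁ + γ'.length = γ₁.length := by
    rw [hγ'len]
    exact countP_not_add _ γ₁
  have partB : phiDrop N y z X ≤ (lambdaX N y z X : ℤ) := by
    unfold phiDrop
    rw [hlam]
    omega
  -- Part C : λ ≤ φ
  have partC : lambdaX N y z X ≤ maxFlowValue N y z := by
    rw [hlam, ← hγ₁lenφ]
    exact List.countP_le_length
  -- Part D : λ ≤ δ
  have hvfnonneg : ∀ f, IsMaxFlow N y z f → ∀ x, 0 ≤ vertexFlow f y z x := by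
    intro f hf x
    unfold vertexFlow
    split
    · rw [hf.2]; positivity
    · positivity
  have hdelne : {n : ℕ | ∃ f, IsMaxFlow N y z f
      ∧ (∑ x ∈ X, vertexFlow f y z x) = (n : ℤ)}.Nonempty := by
    obtain ⟨f, hf⟩ := exists_isMaxFlow N y z
    have hnn : 0 ≤ ∑ x ∈ X, vertexFlow f y z x :=
      Finset.sum_nonneg fun x _ => hvfnonneg f hf x
    exact ⟨(∑ x ∈ X, vertexFlow f y z x).toNat, f, hf, (Int.toNat_of_nonneg hnn).symm⟩
  obtain ⟨f, hf, hfX⟩ := Nat.sInf_mem hdelne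
  have hdel : (deltaX N y z X : ℤ) = ∑ x ∈ X, vertexFlow f y z x := hfX.symm
  obtain ⟨γ, hγpaths, hγlen, hγcnt⟩ := flow_decomp hyz (maxFlowValue N y z) f hf.1 hf.2
  have hγseq : IsPathSeq N y z γ := ⟨hγpaths, fun u v => (hγcnt u v).trans (hf.1.1 u v)⟩
  have hγmem : γ ∈ MaxSeqs N y z := ⟨hγseq, by rw [hγlen, hML]⟩
  have hlamle : lambdaX N y z X ≤ lX X γ := Nat.sInf_le ⟨γ, hγmem, rfl⟩
  have hlXle : (lX X γ : ℤ) ≤ ∑ x ∈ X, vertexFlow f y z x := by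
    by_cases hXyz : y ∈ X ∨ z ∈ X
    · have hall : lX X γ = γ.length := by
        apply List.countP_eq_length.2
        intro p hp
        have hpath := hγpaths p hp
        simp only [List.any_eq_true, decide_eq_true_eq]
        rcases hXyz with h | h
        · exact ⟨y, hpath.mem_head, h⟩
        · exact ⟨z, hpath.mem_last, h⟩
      rw [hall, hγlen]
      rcases hXyz with h | h
      · have hsgl := Finset.single_le_sum (f := fun x => vertexFlow f y z x)
          (fun x _ => hvfnonneg f hf x) h
        have hy : vertexFlow f y z y = (maxFlowValue N y z : ℤ) := by
          unfold vertexFlow; simp [hf.2]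
        have hsgl2 : vertexFlow f y z y ≤ ∑ x ∈ X, vertexFlow f y z x := hsgl
        rw [hy] at hsgl2
        exact hsgl2
      · have hsgl := Finset.single_le_sum (f := fun x => vertexFlow f y z x)
          (fun x _ => hvfnonneg f hf x) h
        have hz : vertexFlow f y z z = (maxFlowValue N y z : ℤ) := by
          unfold vertexFlow; simp [hf.2]
        have hsgl2 : vertexFlow f y z z ≤ ∑ x ∈ X, vertexFlow f y z x := hsgl
        rw [hz] at hsgl2
        exact hsgl2
    · push_neg at hXyz
      obtain ⟨hyX, hzX⟩ := hXyz
      have step1 : lX X γ ≤ ∑ x ∈ X, γ.countP (fun p => decide (x ∈ p)) := by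
        apply countP_le_sum_countP
        intro p hp hP
        simp only [List.any_eq_true, decide_eq_true_eq] at hP
        obtain ⟨x, hxp, hxX⟩ := hP
        exact ⟨x, hxX, by simp [hxp]⟩
      have step2 : ∀ x ∈ X, γ.countP (fun p => decide (x ∈ p))
          ≤ ∑ u : V, γ.countP (fun p => decide ((x, u) ∈ pathArcs p)) := by
        intro x hxX
        apply countP_le_sum_countP (s := Finset.univ)
        intro p hp hP
        simp only [decide_eq_true_eq] at hP
        have hpath := hγpaths p hp
        have hxz : x ≠ z := fun h => hzX (h ▸ hxX)
        have hxdl : x ∈ p.dropLast := by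
          have hcnt := count_dropLast_of_path hpath.1 hpath.2.1 hpath.2.2.1
            hpath.2.2.2.1 x
          rw [if_pos ⟨hP, hxz⟩] at hcnt
          by_contra hnot
          rw [List.count_eq_zero.2 hnot] at hcnt
          omega
        rw [← map_fst_pathArcs] at hxdl
        obtain ⟨a, ha, hax⟩ := List.mem_map.1 hxdl
        refine ⟨a.2, Finset.mem_univ _, ?_⟩
        have : (x, a.2) = a := by rw [← hax]
        simp [this, ha]
      have hchain : lX X γ ≤ ∑ x ∈ X, ∑ u : V, f x u :=
        le_trans step1 (Finset.sum_le_sum fun x hx =>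
          le_trans (step2 x hx) (Finset.sum_le_sum fun u _ => hγcnt x u))
      calc (lX X γ : ℤ) ≤ ∑ x ∈ X, ∑ u : V, (f x u : ℤ) := by exact_mod_cast hchain
        _ = ∑ x ∈ X, vertexFlow f y z x := by
            apply Finset.sum_congr rfl
            intro x hx
            have hxy : ¬(x = y ∨ x = z) := by
              rintro (rfl | rfl)
              exacts [hyX hx, hzX hx]
            simp [vertexFlow, hxy]
  have partD : lambdaX N y z X ≤ deltaX N y z X := by
    have h2 : (lX X γ : ℤ) ≤ (deltaX N y z X : ℤ) := by rw [hdel]; exact hlXle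
    have h3 : lX X γ ≤ deltaX N y z X := by exact_mod_cast h2
    exact le_trans hlamle h3
  exact ⟨partA, partB, le_min partD partC⟩

end NetFlow

/-- `0 ≤ φ^N_{yz}(X) ≤ λ^N_{yz}(X) ≤ min{δ^N_{yz}(X), φ^N_{yz}}`. -/
theorem phiDrop_le_lambda_le_min {V : Type*} [Fintype V] [DecidableEq V]
    (hV : 2 ≤ Fintype.card V) (N : Network V) (y z : V) (hyz : y ≠ z) (X : Finset V) :
    0 ≤ NetFlow.phiDrop N y z X ∧
      NetFlow.phiDrop N y z X ≤ (NetFlow.lambdaX N y z X : ℤ) ∧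
      NetFlow.lambdaX N y z X ≤ min (NetFlow.deltaX N y z X) (NetFlow.maxFlowValue N y z) :=
  NetFlow.main_aux N y z hyz X
end

section
/- There exist a network N = (V, A, c), a subset X ⊆ V and distinct vertices y, z ∈ V such that δ^N_{yz}(X) > λ^N_{yz}(X). (Concretely, one may take V = {y, x₁, u, x₂, z}, X = {x₁, x₂}, and capacity 1 on exactly the arcs (y,x₁), (x₁,u), (u,x₂), (x₂,z) and 0 elsewhere; then δ^N_{yz}(X) = 2 while λ^N_{yz}(X) = 1.) -/
namespace ProofAux
open NetFlow

def cEx : Fin 5 → Fin 5 → ℕ := fun u v =>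
  match u, v with
  | 0, 1 => 1 | 1, 2 => 1 | 2, 3 => 1 | 3, 4 => 1
  | _, _ => 0

def NEx : Network (Fin 5) := ⟨cEx, by decide⟩

example : NEx.c 0 1 = 1 := rfl
example : NEx.c 2 2 = 0 := rfl

lemma cEx_flow : NetFlow.IsFlow NEx 0 4 cEx := by
  refine ⟨fun u v => le_refl _, by decide⟩

lemma cEx_value : NetFlow.flowValue cEx 0 = 1 := by
  simp [NetFlow.flowValue, Fin.sum_univ_five, cEx]

lemma flow_val_le (f : Fin 5 → Fin 5 → ℕ) (hf : NetFlow.IsFlow NEx 0 4 f) :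
    NetFlow.flowValue f 0 ≤ 1 := by
  have b00 : f 0 0 ≤ 0 := hf.1 0 0
  have b01 : f 0 1 ≤ 1 := hf.1 0 1
  have b02 : f 0 2 ≤ 0 := hf.1 0 2
  have b03 : f 0 3 ≤ 0 := hf.1 0 3
  have b04 : f 0 4 ≤ 0 := hf.1 0 4
  simp only [NetFlow.flowValue, Fin.sum_univ_five]
  omega

lemma maxFlow_eq : NetFlow.maxFlowValue NEx 0 4 = 1 := by
  have h1 : 1 ∈ {m : ℕ | ∃ f, NetFlow.IsFlow NEx 0 4 f ∧ NetFlow.flowValue f 0 = (m : ℤ)} :=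
    ⟨cEx, cEx_flow, by rw [cEx_value]; norm_num⟩
  have hub : ∀ m ∈ {m : ℕ | ∃ f, NetFlow.IsFlow NEx 0 4 f ∧ NetFlow.flowValue f 0 = (m : ℤ)},
      m ≤ 1 := by
    rintro m ⟨f, hf, hv⟩
    have := flow_val_le f hf
    rw [hv] at this
    exact_mod_cast this
  exact le_antisymm (csSup_le ⟨1, h1⟩ hub) (le_csSup ⟨1, hub⟩ h1)

lemma cEx_maxflow : NetFlow.IsMaxFlow NEx 0 4 cEx :=
  ⟨cEx_flow, by rw [cEx_value, maxFlow_eq]; norm_num⟩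

def γ0 : List (List (Fin 5)) := [[0,1,2,3,4]]

lemma γ0_seq : NetFlow.IsPathSeq NEx 0 4 γ0 := by
  refine ⟨?_, by decide⟩
  intro p hp
  simp only [γ0, List.mem_singleton] at hp
  subst hp
  refine ⟨by decide, by decide, by decide, by decide, ?_⟩
  simp only [List.Chain', List.isChain_cons_cons, List.isChain_singleton, and_true]
  decide

lemma seq_len_le (γ : List (List (Fin 5))) (hγ : NetFlow.IsPathSeq NEx 0 4 γ) :
    γ.length ≤ 1 := by
  have key : ∀ p ∈ γ, (fun p => decide (((0:Fin 5), (1:Fin 5)) ∈ NetFlow.pathArcs p)) p = true := by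
    intro p hp
    have hP := hγ.1 p hp
    obtain ⟨hlen, hnd, hhead, hlast, hchain⟩ := hP
    match p, hlen with
    | a :: b :: t, _ =>
      have ha : a = 0 := by simpa using hhead
      subst ha
      have hab : 1 ≤ NEx.c 0 b := (List.isChain_cons_cons.mp hchain).1
      have hb : b = 1 := by
        have h : ∀ v : Fin 5, 1 ≤ NEx.c 0 v → v = 1 := by decide
        exact h b hab
      subst hb
      simp [NetFlow.pathArcs]
  have := hγ.2 0 1
  rw [List.countP_eq_length.mpr key] at this
  exact this

lemma maxSeqLen_eq : NetFlow.maxSeqLen NEx 0 4 = 1 := by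
  have h1 : 1 ∈ {m : ℕ | ∃ γ, NetFlow.IsPathSeq NEx 0 4 γ ∧ γ.length = m} := ⟨γ0, γ0_seq, rfl⟩
  have hub : ∀ m ∈ {m : ℕ | ∃ γ, NetFlow.IsPathSeq NEx 0 4 γ ∧ γ.length = m}, m ≤ 1 := by
    rintro m ⟨γ, hγ, rfl⟩; exact seq_len_le γ hγ
  exact le_antisymm (csSup_le ⟨1, h1⟩ hub) (le_csSup ⟨1, hub⟩ h1)

lemma lambda_le : NetFlow.lambdaX NEx 0 4 {1,3} ≤ 1 := by
  apply Nat.sInf_le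
  refine ⟨γ0, ⟨γ0_seq, by rw [maxSeqLen_eq]; rfl⟩, ?_⟩
  decide

lemma cEx_sum : (∑ x ∈ ({1,3} : Finset (Fin 5)), NetFlow.vertexFlow cEx 0 4 x) = (2:ℤ) := by
  rw [Finset.sum_pair (by decide : (1:Fin 5) ≠ 3)]
  simp [NetFlow.vertexFlow, Fin.sum_univ_five, cEx]

lemma delta_ge : 2 ≤ NetFlow.deltaX NEx 0 4 {1,3} := by
  have hne : {n : ℕ | ∃ f, NetFlow.IsMaxFlow NEx 0 4 f ∧
      (∑ x ∈ ({1,3} : Finset (Fin 5)), NetFlow.vertexFlow f 0 4 x) = (n : ℤ)}.Nonempty :=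
    ⟨2, cEx, cEx_maxflow, by rw [cEx_sum]; norm_num⟩
  obtain ⟨f, hf, hsum⟩ := Nat.sInf_mem hne
  rw [show sInf _ = NetFlow.deltaX NEx 0 4 {1,3} from rfl] at hsum
  -- extract facts
  have hval : NetFlow.flowValue f 0 = 1 := by rw [hf.2, maxFlow_eq]; norm_num
  have hc1 := hf.1.2 1 (by decide) (by decide)
  have hc2 := hf.1.2 2 (by decide) (by decide)
  have hc3 := hf.1.2 3 (by decide) (by decide)
  have b00 : f 0 0 ≤ 0 := hf.1.1 0 0
  have b01 : f 0 1 ≤ 1 := hf.1.1 0 1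
  have b02 : f 0 2 ≤ 0 := hf.1.1 0 2
  have b03 : f 0 3 ≤ 0 := hf.1.1 0 3
  have b04 : f 0 4 ≤ 0 := hf.1.1 0 4
  have b10 : f 1 0 ≤ 0 := hf.1.1 1 0
  have b11 : f 1 1 ≤ 0 := hf.1.1 1 1
  have b12 : f 1 2 ≤ 1 := hf.1.1 1 2
  have b13 : f 1 3 ≤ 0 := hf.1.1 1 3
  have b14 : f 1 4 ≤ 0 := hf.1.1 1 4
  have b20 : f 2 0 ≤ 0 := hf.1.1 2 0
  have b21 : f 2 1 ≤ 0 := hf.1.1 2 1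
  have b22 : f 2 2 ≤ 0 := hf.1.1 2 2
  have b23 : f 2 3 ≤ 1 := hf.1.1 2 3
  have b24 : f 2 4 ≤ 0 := hf.1.1 2 4
  have b30 : f 3 0 ≤ 0 := hf.1.1 3 0
  have b31 : f 3 1 ≤ 0 := hf.1.1 3 1
  have b32 : f 3 2 ≤ 0 := hf.1.1 3 2
  have b33 : f 3 3 ≤ 0 := hf.1.1 3 3
  have b34 : f 3 4 ≤ 1 := hf.1.1 3 4
  have b40 : f 4 0 ≤ 0 := hf.1.1 4 0
  have b41 : f 4 1 ≤ 0 := hf.1.1 4 1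
  have b42 : f 4 2 ≤ 0 := hf.1.1 4 2
  have b43 : f 4 3 ≤ 0 := hf.1.1 4 3
  have b44 : f 4 4 ≤ 0 := hf.1.1 4 4
  rw [Finset.sum_pair (by decide : (1:Fin 5) ≠ 3)] at hsum
  simp only [NetFlow.vertexFlow, NetFlow.flowValue, Fin.sum_univ_five,
    show ¬((1:Fin 5) = 0 ∨ (1:Fin 5) = 4) by decide,
    show ¬((3:Fin 5) = 0 ∨ (3:Fin 5) = 4) by decide, if_neg, if_false] at hsum
  simp only [NetFlow.flowValue, Fin.sum_univ_five] at hval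
  simp only [Fin.sum_univ_five] at hc1 hc2 hc3
  omega

end ProofAux


/-- there is a network, a set `X` of vertices and distinct vertices `y, z`
with `δ^N_{yz}(X) > λ^N_{yz}(X)`. -/
theorem exists_delta_gt_lambda :
    ∃ (N : Network (Fin 5)) (X : Finset (Fin 5)) (y z : Fin 5),
      y ≠ z ∧ NetFlow.lambdaX N y z X < NetFlow.deltaX N y z X := by
  refine ⟨ProofAux.NEx, {1, 3}, 0, 4, by decide, ?_⟩
  have h1 := ProofAux.lambda_le
  have h2 := ProofAux.delta_ge
  omega
end
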